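/- Intuitionistic-to-classical translation of proofs: if the labeled sequent R, Γ ⊢ w : A is derivable in the refined labeled calculus L*_Σ(𝒜), then the classical labeled sequent R ⊢ ¬Γ, w : A (where ¬Γ negates every labeled formula of Γ, and each formula of L_Σ is read as a formula of the classical language L^C_Σ via ⊥ := p∧¬p and B⊃C := ¬B∨C) is derivable in the refined labeled calculus L^C_Σ(𝒜) for the corresponding classical grammar logic. -/

import Mathlib

namespace IGL

/-- An alphabet Σ: a nonempty countable type of characters partitioned into a
forward part and a backward part by an involutive converse operation. -/
structure Alphabet where
  Char : Type
  nonempty : Nonempty Char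
  countable : Countable Char
  fwd : Char → Prop
  conv : Char → Char
  conv_conv : ∀ x, conv (conv x) = x
  fwd_iff : ∀ x, fwd x ↔ ¬ fwd (conv x)

/-- Formulae of the intuitionistic multi-modal language `L_Σ`. -/
inductive Formula (C : Type) : Type
  | atom : ℕ → Formula C
  | bot  : Formula C
  | or   : Formula C → Formula C → Formula C
  | and  : Formula C → Formula C → Formula C
  | imp  : Formula C → Formula C → Formula C
  | dia  : C → Formula C → Formula C
  | box  : C → Formula C → Formula C

namespace Formula
/-- Intuitionistic negation `¬A := A ⊃ ⊥`. -/
def neg {C : Type} (A : Formula C) : Formula C := A.imp Formula.bot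
/-- `A ≡ B := (A ⊃ B) ∧ (B ⊃ A)`. -/
def equiv {C : Type} (A B : Formula C) : Formula C := (A.imp B).and (B.imp A)
end Formula

/-- Bi-relational Σ-models. -/
structure BiModel (α : Alphabet) where
  W : Type
  nonempty : Nonempty W
  le : W → W → Prop
  le_refl : ∀ w, le w w
  le_trans : ∀ w u v, le w u → le u v → le w v
  R : α.Char → W → W → Prop
  F1 : ∀ x w v v', R x w v → le v v' → ∃ w', le w w' ∧ R x w' v'
  F2 : ∀ x w w' v, le w w' → R x w v → ∃ v', R x w' v' ∧ le v v'
  F3 : ∀ x w u, R x w u ↔ R (α.conv x) u w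
  V : W → ℕ → Prop
  mono : ∀ w u, le w u → ∀ p, V w p → V u p

/-- Satisfaction `M,w ⊩ A`. -/
def Sat {α : Alphabet} (M : BiModel α) : M.W → Formula α.Char → Prop
  | w, Formula.atom p => M.V w p
  | _, Formula.bot => False
  | w, Formula.or A B => Sat M w A ∨ Sat M w B
  | w, Formula.and A B => Sat M w A ∧ Sat M w B
  | w, Formula.imp A B => ∀ w', M.le w w' → Sat M w' A → Sat M w' B
  | w, Formula.dia x A => ∃ v, M.R x w v ∧ Sat M v A
  | w, Formula.box x A => ∀ w' v', M.le w w' → M.R x w' v' → Sat M v' A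

/-- Axioms: seriality axioms `D_x` or intuitionistic path axioms
`(⟨x₁⟩⋯⟨xₙ⟩A ⊃ ⟨x⟩A) ∧ ([x]A ⊃ [x₁]⋯[xₙ]A)`, encoded by the character `x`
and the string `[x₁,…,xₙ]`. -/
inductive Ax (C : Type) : Type
  | ser : C → Ax C
  | ipa : C → List C → Ax C

/-- Composition of the accessibility relations along a string. -/
def BiModel.Rs {α : Alphabet} (M : BiModel α) : List α.Char → M.W → M.W → Prop
  | [], w, u => w = u
  | x :: s, w, u => ∃ v, M.R x w v ∧ M.Rs s v u

/-- The frame condition corresponding to an axiom. -/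
def SatisfiesAx {α : Alphabet} (M : BiModel α) : Ax α.Char → Prop
  | Ax.ser x => ∀ w, ∃ u, M.R x w u
  | Ax.ipa x s => ∀ w u, M.Rs s w u → M.R x w u

/-- A bi-relational (Σ,𝒜)-model. -/
def AModel {α : Alphabet} (𝒜 : Set (Ax α.Char)) (M : BiModel α) : Prop :=
  ∀ a ∈ 𝒜, SatisfiesAx M a

/-- `⟨x₁⟩⋯⟨xₙ⟩A`. -/
def dias {C : Type} : List C → Formula C → Formula C
  | [], A => A
  | x :: s, A => Formula.dia x (dias s A)

/-- `[x₁]⋯[xₙ]A`. -/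
def boxes {C : Type} : List C → Formula C → Formula C
  | [], A => A
  | x :: s, A => Formula.box x (boxes s A)

/-- The Hilbert system `H IK_m(Σ,𝒜)`. -/
inductive Hprf (α : Alphabet) (𝒜 : Set (Ax α.Char)) : Formula α.Char → Prop
  | ipl1 (A B : Formula α.Char) : Hprf α 𝒜 (A.imp (B.imp A))
  | ipl2 (A B C : Formula α.Char) : Hprf α 𝒜 ((A.imp (B.imp C)).imp ((A.imp B).imp (A.imp C)))
  | ipl3 (A B : Formula α.Char) : Hprf α 𝒜 (A.imp (A.or B))
  | ipl4 (A B : Formula α.Char) : Hprf α 𝒜 (B.imp (A.or B))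
  | ipl5 (A B C : Formula α.Char) : Hprf α 𝒜 ((A.imp C).imp ((B.imp C).imp ((A.or B).imp C)))
  | ipl6 (A B : Formula α.Char) : Hprf α 𝒜 ((A.and B).imp A)
  | ipl7 (A B : Formula α.Char) : Hprf α 𝒜 ((A.and B).imp B)
  | ipl8 (A B : Formula α.Char) : Hprf α 𝒜 (A.imp (B.imp (A.and B)))
  | ipl9 (A : Formula α.Char) : Hprf α 𝒜 (Formula.bot.imp A)
  | axK (x : α.Char) (A B : Formula α.Char) : Hprf α 𝒜 ((Formula.box x (A.imp B)).imp ((Formula.box x A).imp (Formula.box x B)))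
  | axBoxAnd (x : α.Char) (A B : Formula α.Char) : Hprf α 𝒜 ((Formula.box x (A.and B)).equiv ((Formula.box x A).and (Formula.box x B)))
  | axDiaOr (x : α.Char) (A B : Formula α.Char) : Hprf α 𝒜 ((Formula.dia x (A.or B)).equiv ((Formula.dia x A).or (Formula.dia x B)))
  | axKdia (x : α.Char) (A B : Formula α.Char) : Hprf α 𝒜 ((Formula.box x (A.imp B)).imp ((Formula.dia x A).imp (Formula.dia x B)))
  | axBoxDia (x : α.Char) (A B : Formula α.Char) : Hprf α 𝒜 (((Formula.box x A).and (Formula.dia x B)).imp (Formula.dia x (A.and B)))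
  | axNotDiaBot (x : α.Char) : Hprf α 𝒜 (Formula.dia x Formula.bot).neg
  | axConv (x : α.Char) (A : Formula α.Char) : Hprf α 𝒜 ((A.imp (Formula.box x (Formula.dia (α.conv x) A))).and
      ((Formula.dia x (Formula.box (α.conv x) A)).imp A))
  | axFS (x : α.Char) (A B : Formula α.Char) : Hprf α 𝒜 (((Formula.dia x A).imp (Formula.box x B)).imp (Formula.box x (A.imp B)))
  | axDiaImp (x : α.Char) (A B : Formula α.Char) : Hprf α 𝒜 ((Formula.dia x (A.imp B)).imp ((Formula.box x A).imp (Formula.dia x B)))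
  | axSer (x : α.Char) (A : Formula α.Char) (h : Ax.ser x ∈ 𝒜) : Hprf α 𝒜 ((Formula.box x A).imp (Formula.dia x A))
  | axIpa (x : α.Char) (s : List α.Char) (A : Formula α.Char) (h : Ax.ipa x s ∈ 𝒜) :
      Hprf α 𝒜 (((dias s A).imp (Formula.dia x A)).and ((Formula.box x A).imp (boxes s A)))
  | mp (A B : Formula α.Char) : Hprf α 𝒜 (A.imp B) → Hprf α 𝒜 A → Hprf α 𝒜 B
  | nec (x : α.Char) (A : Formula α.Char) : Hprf α 𝒜 A → Hprf α 𝒜 (Formula.box x A)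

/-- `B₁ ∧ ⋯ ∧ Bₙ` (left-nested). -/
def conjList {C : Type} : Formula C → List (Formula C) → Formula C
  | A, [] => A
  | A, B :: L => conjList (A.and B) L

/-- `𝒮 ⊢_𝒜 A`: either `A ∈ IK_m(Σ,𝒜)` or `B₁∧⋯∧Bₙ ⊃ A ∈ IK_m(Σ,𝒜)` for some
`B₁,…,Bₙ ∈ 𝒮`. -/
def HderivFrom (α : Alphabet) (𝒜 : Set (Ax α.Char)) (S : Set (Formula α.Char))
    (A : Formula α.Char) : Prop :=
  Hprf α 𝒜 A ∨ ∃ B L, B ∈ S ∧ (∀ D ∈ L, D ∈ S) ∧ Hprf α 𝒜 ((conjList B L).imp A)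

/-! ### Labeled sequents -/

/-- A relational atom `w R_x u`. -/
abbrev Rel (C : Type) := ℕ × C × ℕ
/-- A labeled formula `w : A`. -/
abbrev LF (C : Type) := ℕ × Formula C

def relLabels {C : Type} (R : Multiset (Rel C)) : Set ℕ :=
  {l | ∃ a ∈ R, a.1 = l ∨ a.2.2 = l}

def lfLabels {C : Type} (Γ : Multiset (LF C)) : Set ℕ :=
  {l | ∃ b ∈ Γ, b.1 = l}

/-- `u` is fresh with respect to the sequent `R, Γ ⊢ v : ⋯`. -/
def freshIn {C : Type} (u : ℕ) (R : Multiset (Rel C)) (Γ : Multiset (LF C)) (v : ℕ) : Prop :=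
  u ∉ relLabels R ∧ u ∉ lfLabels Γ ∧ u ≠ v

/-- `Chain s w u m`: the multiset `m` is a chain of relational atoms `w R_s u`
along the string `s` (with `w = u` and `m = 0` when `s = ε`). -/
inductive Chain {C : Type} : List C → ℕ → ℕ → Multiset (Rel C) → Prop
  | nil (w : ℕ) : Chain [] w w 0
  | cons {x : C} {s : List C} {w v u : ℕ} {m : Multiset (Rel C)} :
      Chain s v u m → Chain (x :: s) w u ((w, x, v) ::ₘ m)

/-- The labeled calculus `L_Σ(𝒜)`, height-indexed: `LD α 𝒜 n R Γ w A` states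
that the labeled sequent `R, Γ ⊢ w : A` has a proof of height at most `n`. -/
inductive LD (α : Alphabet) (𝒜 : Set (Ax α.Char)) :
    ℕ → Multiset (Rel α.Char) → Multiset (LF α.Char) → ℕ → Formula α.Char → Prop
  | id (n : ℕ) (R : Multiset (Rel α.Char)) (Γ : Multiset (LF α.Char)) (w p : ℕ) : LD α 𝒜 n R ((w, Formula.atom p) ::ₘ Γ) w (Formula.atom p)
  | botL (n : ℕ) (R : Multiset (Rel α.Char)) (Γ : Multiset (LF α.Char)) (w u : ℕ) (A : Formula α.Char) : LD α 𝒜 n R ((w, Formula.bot) ::ₘ Γ) u A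
  | orL {n : ℕ} {R : Multiset (Rel α.Char)} {Γ : Multiset (LF α.Char)} {w u : ℕ} {A B C : Formula α.Char} :
      LD α 𝒜 n R ((w, A) ::ₘ Γ) u C → LD α 𝒜 n R ((w, B) ::ₘ Γ) u C →
      LD α 𝒜 (n + 1) R ((w, A.or B) ::ₘ Γ) u C
  | orR1 {n : ℕ} {R : Multiset (Rel α.Char)} {Γ : Multiset (LF α.Char)} {w : ℕ} {A B : Formula α.Char} : LD α 𝒜 n R Γ w A → LD α 𝒜 (n + 1) R Γ w (A.or B)
  | orR2 {n : ℕ} {R : Multiset (Rel α.Char)} {Γ : Multiset (LF α.Char)} {w : ℕ} {A B : Formula α.Char} : LD α 𝒜 n R Γ w B → LD α 𝒜 (n + 1) R Γ w (A.or B)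
  | andL {n : ℕ} {R : Multiset (Rel α.Char)} {Γ : Multiset (LF α.Char)} {w u : ℕ} {A B C : Formula α.Char} :
      LD α 𝒜 n R ((w, A) ::ₘ (w, B) ::ₘ Γ) u C →
      LD α 𝒜 (n + 1) R ((w, A.and B) ::ₘ Γ) u C
  | andR {n : ℕ} {R : Multiset (Rel α.Char)} {Γ : Multiset (LF α.Char)} {w : ℕ} {A B : Formula α.Char} :
      LD α 𝒜 n R Γ w A → LD α 𝒜 n R Γ w B → LD α 𝒜 (n + 1) R Γ w (A.and B)
  | impL {n : ℕ} {R : Multiset (Rel α.Char)} {Γ : Multiset (LF α.Char)} {w u : ℕ} {A B C : Formula α.Char} :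
      LD α 𝒜 n R ((w, A.imp B) ::ₘ Γ) w A → LD α 𝒜 n R ((w, B) ::ₘ Γ) u C →
      LD α 𝒜 (n + 1) R ((w, A.imp B) ::ₘ Γ) u C
  | impR {n : ℕ} {R : Multiset (Rel α.Char)} {Γ : Multiset (LF α.Char)} {w : ℕ} {A B : Formula α.Char} :
      LD α 𝒜 n R ((w, A) ::ₘ Γ) w B → LD α 𝒜 (n + 1) R Γ w (A.imp B)
  | diaL {n : ℕ} {R : Multiset (Rel α.Char)} {Γ : Multiset (LF α.Char)} {w u v : ℕ} {x : α.Char} {A B : Formula α.Char} (hf : freshIn u R ((w, Formula.dia x A) ::ₘ Γ) v) :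
      LD α 𝒜 n ((w, x, u) ::ₘ R) ((u, A) ::ₘ Γ) v B →
      LD α 𝒜 (n + 1) R ((w, Formula.dia x A) ::ₘ Γ) v B
  | diaR {n : ℕ} {R : Multiset (Rel α.Char)} {Γ : Multiset (LF α.Char)} {w u : ℕ} {x : α.Char} {A : Formula α.Char} :
      LD α 𝒜 n ((w, x, u) ::ₘ R) Γ u A →
      LD α 𝒜 (n + 1) ((w, x, u) ::ₘ R) Γ w (Formula.dia x A)
  | boxR {n : ℕ} {R : Multiset (Rel α.Char)} {Γ : Multiset (LF α.Char)} {w u : ℕ} {x : α.Char} {A : Formula α.Char} (hf : freshIn u R Γ w) :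
      LD α 𝒜 n ((w, x, u) ::ₘ R) Γ u A → LD α 𝒜 (n + 1) R Γ w (Formula.box x A)
  | boxL {n : ℕ} {R : Multiset (Rel α.Char)} {Γ : Multiset (LF α.Char)} {w u v : ℕ} {x : α.Char} {A C : Formula α.Char} :
      LD α 𝒜 n ((w, x, u) ::ₘ R) ((w, Formula.box x A) ::ₘ (u, A) ::ₘ Γ) v C →
      LD α 𝒜 (n + 1) ((w, x, u) ::ₘ R) ((w, Formula.box x A) ::ₘ Γ) v C
  | dx {n : ℕ} {R : Multiset (Rel α.Char)} {Γ : Multiset (LF α.Char)} {u v : ℕ} {x : α.Char} {A : Formula α.Char} (w : ℕ) (hax : Ax.ser x ∈ 𝒜) (hf : freshIn u R Γ v) :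
      LD α 𝒜 n ((w, x, u) ::ₘ R) Γ v A → LD α 𝒜 (n + 1) R Γ v A
  | isx {n : ℕ} {R : Multiset (Rel α.Char)} {Γ : Multiset (LF α.Char)} {w u v : ℕ} {s : List α.Char} {x : α.Char} {m : Multiset (Rel α.Char)} {A : Formula α.Char} (hax : Ax.ipa x s ∈ 𝒜) (hc : Chain s w u m) :
      LD α 𝒜 n ((w, x, u) ::ₘ (m + R)) Γ v A → LD α 𝒜 (n + 1) (m + R) Γ v A
  | cx {n : ℕ} {R : Multiset (Rel α.Char)} {Γ : Multiset (LF α.Char)} {w u v : ℕ} {x : α.Char} {A : Formula α.Char} :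
      LD α 𝒜 n ((w, x, u) ::ₘ (u, α.conv x, w) ::ₘ R) Γ v A →
      LD α 𝒜 (n + 1) ((w, x, u) ::ₘ R) Γ v A

/-- Derivability in `L_Σ(𝒜)`. -/
def LDeriv (α : Alphabet) (𝒜 : Set (Ax α.Char)) (R : Multiset (Rel α.Char))
    (Γ : Multiset (LF α.Char)) (w : ℕ) (A : Formula α.Char) : Prop :=
  ∃ n, LD α 𝒜 n R Γ w A

/-- (Σ,𝒜)-validity of a labeled sequent. -/
def SeqValid (α : Alphabet) (𝒜 : Set (Ax α.Char)) (R : Multiset (Rel α.Char))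
    (Γ : Multiset (LF α.Char)) (w : ℕ) (A : Formula α.Char) : Prop :=
  ∀ (M : BiModel α), AModel 𝒜 M → ∀ I : ℕ → M.W,
    (∀ a ∈ R, M.R a.2.1 (I a.1) (I a.2.2)) → (∀ b ∈ Γ, Sat M (I b.1) b.2) →
      Sat M (I w) A

/-! ### Grammars and propagation -/

/-- Converse of a string: `s̄ = x̄ₙ⋯x̄₁` for `s = x₁⋯xₙ`. -/
def convStr {C : Type} (cv : C → C) (s : List C) : List C := (s.map cv).reverse

/-- The 𝒜-grammar `g(𝒜)`. -/
def Gram (α : Alphabet) (𝒜 : Set (Ax α.Char)) : Set (α.Char × List α.Char) :=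
  {p | Ax.ipa p.1 p.2 ∈ 𝒜 ∨
        ∃ x s, Ax.ipa x s ∈ 𝒜 ∧ p.1 = α.conv x ∧ p.2 = convStr α.conv s}

/-- One-step derivation between strings in a grammar. -/
def Step {C : Type} (g : Set (C × List C)) (s t : List C) : Prop :=
  ∃ s₁ s₂ x r, (x, r) ∈ g ∧ s = s₁ ++ x :: s₂ ∧ t = s₁ ++ r ++ s₂

/-- The language of the character `x` relative to a grammar. -/
def Lang {C : Type} (g : Set (C × List C)) (x : C) : Set (List C) :=
  {t | Relation.ReflTransGen (Step g) [x] t}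

/-- An edge of the propagation graph `PG(R)`. -/
def PGEdge (α : Alphabet) (R : Multiset (Rel α.Char)) (a : ℕ) (x : α.Char) (b : ℕ) : Prop :=
  (a, x, b) ∈ R ∨ (b, α.conv x, a) ∈ R

/-- `PPath α R w u s`: there is a propagation path from `w` to `u` in `PG(R)`
whose string is `s`. -/
inductive PPath (α : Alphabet) (R : Multiset (Rel α.Char)) : ℕ → ℕ → List α.Char → Prop
  | nil (w : ℕ) : PPath α R w w []
  | cons {w v u : ℕ} {x : α.Char} {s : List α.Char} :
      PGEdge α R w x v → PPath α R v u s → PPath α R w u (x :: s)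

/-- Side condition of the propagation rules: there exists a propagation path
`π(w,u)` in `PG(R)` with `s_π(w,u) ∈ L_{g(𝒜)}(x)`. -/
def CanProp (α : Alphabet) (𝒜 : Set (Ax α.Char)) (R : Multiset (Rel α.Char))
    (w u : ℕ) (x : α.Char) : Prop :=
  ∃ s, PPath α R w u s ∧ s ∈ Lang (Gram α 𝒜) x

/-- The refined labeled calculus `L*_Σ(𝒜)`, height-indexed. -/
inductive LDs (α : Alphabet) (𝒜 : Set (Ax α.Char)) :
    ℕ → Multiset (Rel α.Char) → Multiset (LF α.Char) → ℕ → Formula α.Char → Prop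
  | id (n : ℕ) (R : Multiset (Rel α.Char)) (Γ : Multiset (LF α.Char)) (w p : ℕ) : LDs α 𝒜 n R ((w, Formula.atom p) ::ₘ Γ) w (Formula.atom p)
  | botL (n : ℕ) (R : Multiset (Rel α.Char)) (Γ : Multiset (LF α.Char)) (w u : ℕ) (A : Formula α.Char) : LDs α 𝒜 n R ((w, Formula.bot) ::ₘ Γ) u A
  | orL {n : ℕ} {R : Multiset (Rel α.Char)} {Γ : Multiset (LF α.Char)} {w u : ℕ} {A B C : Formula α.Char} :
      LDs α 𝒜 n R ((w, A) ::ₘ Γ) u C → LDs α 𝒜 n R ((w, B) ::ₘ Γ) u C →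
      LDs α 𝒜 (n + 1) R ((w, A.or B) ::ₘ Γ) u C
  | orR1 {n : ℕ} {R : Multiset (Rel α.Char)} {Γ : Multiset (LF α.Char)} {w : ℕ} {A B : Formula α.Char} : LDs α 𝒜 n R Γ w A → LDs α 𝒜 (n + 1) R Γ w (A.or B)
  | orR2 {n : ℕ} {R : Multiset (Rel α.Char)} {Γ : Multiset (LF α.Char)} {w : ℕ} {A B : Formula α.Char} : LDs α 𝒜 n R Γ w B → LDs α 𝒜 (n + 1) R Γ w (A.or B)
  | andL {n : ℕ} {R : Multiset (Rel α.Char)} {Γ : Multiset (LF α.Char)} {w u : ℕ} {A B C : Formula α.Char} :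
      LDs α 𝒜 n R ((w, A) ::ₘ (w, B) ::ₘ Γ) u C →
      LDs α 𝒜 (n + 1) R ((w, A.and B) ::ₘ Γ) u C
  | andR {n : ℕ} {R : Multiset (Rel α.Char)} {Γ : Multiset (LF α.Char)} {w : ℕ} {A B : Formula α.Char} :
      LDs α 𝒜 n R Γ w A → LDs α 𝒜 n R Γ w B → LDs α 𝒜 (n + 1) R Γ w (A.and B)
  | impL {n : ℕ} {R : Multiset (Rel α.Char)} {Γ : Multiset (LF α.Char)} {w u : ℕ} {A B C : Formula α.Char} :
      LDs α 𝒜 n R ((w, A.imp B) ::ₘ Γ) w A → LDs α 𝒜 n R ((w, B) ::ₘ Γ) u C →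
      LDs α 𝒜 (n + 1) R ((w, A.imp B) ::ₘ Γ) u C
  | impR {n : ℕ} {R : Multiset (Rel α.Char)} {Γ : Multiset (LF α.Char)} {w : ℕ} {A B : Formula α.Char} :
      LDs α 𝒜 n R ((w, A) ::ₘ Γ) w B → LDs α 𝒜 (n + 1) R Γ w (A.imp B)
  | diaL {n : ℕ} {R : Multiset (Rel α.Char)} {Γ : Multiset (LF α.Char)} {w u v : ℕ} {x : α.Char} {A B : Formula α.Char} (hf : freshIn u R ((w, Formula.dia x A) ::ₘ Γ) v) :
      LDs α 𝒜 n ((w, x, u) ::ₘ R) ((u, A) ::ₘ Γ) v B →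
      LDs α 𝒜 (n + 1) R ((w, Formula.dia x A) ::ₘ Γ) v B
  | boxR {n : ℕ} {R : Multiset (Rel α.Char)} {Γ : Multiset (LF α.Char)} {w u : ℕ} {x : α.Char} {A : Formula α.Char} (hf : freshIn u R Γ w) :
      LDs α 𝒜 n ((w, x, u) ::ₘ R) Γ u A → LDs α 𝒜 (n + 1) R Γ w (Formula.box x A)
  | dx {n : ℕ} {R : Multiset (Rel α.Char)} {Γ : Multiset (LF α.Char)} {u v : ℕ} {x : α.Char} {A : Formula α.Char} (w : ℕ) (hax : Ax.ser x ∈ 𝒜) (hf : freshIn u R Γ v) :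
      LDs α 𝒜 n ((w, x, u) ::ₘ R) Γ v A → LDs α 𝒜 (n + 1) R Γ v A
  | pdia {n : ℕ} {R : Multiset (Rel α.Char)} {Γ : Multiset (LF α.Char)} {u : ℕ} {x : α.Char} {A : Formula α.Char} (w : ℕ) (h : CanProp α 𝒜 R w u x) :
      LDs α 𝒜 n R Γ u A → LDs α 𝒜 (n + 1) R Γ w (Formula.dia x A)
  | pbox {n : ℕ} {R : Multiset (Rel α.Char)} {Γ : Multiset (LF α.Char)} {w u v : ℕ} {x : α.Char} {A B : Formula α.Char} (h : CanProp α 𝒜 R w u x) :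
      LDs α 𝒜 n R ((w, Formula.box x A) ::ₘ (u, A) ::ₘ Γ) v B →
      LDs α 𝒜 (n + 1) R ((w, Formula.box x A) ::ₘ Γ) v B

/-- Derivability in `L*_Σ(𝒜)`. -/
def LDerivS (α : Alphabet) (𝒜 : Set (Ax α.Char)) (R : Multiset (Rel α.Char))
    (Γ : Multiset (LF α.Char)) (w : ℕ) (A : Formula α.Char) : Prop :=
  ∃ n, LDs α 𝒜 n R Γ w A

/-! ### Label substitutions -/

/-- `subL v u l`: replace the label `v` by `u`. -/
def subL (v u l : ℕ) : ℕ := if l = v then u else l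

def subR {C : Type} (v u : ℕ) (R : Multiset (Rel C)) : Multiset (Rel C) :=
  R.map (fun a => (subL v u a.1, a.2.1, subL v u a.2.2))

def subG {C : Type} (v u : ℕ) (Γ : Multiset (LF C)) : Multiset (LF C) :=
  Γ.map (fun b => (subL v u b.1, b.2))

/-! ### Double-negation translations -/

/-- The double-negation translation on `L_Σ`. -/
def dnt {C : Type} : Formula C → Formula C
  | Formula.atom p => ((Formula.atom p).neg).neg
  | Formula.bot => ((Formula.bot : Formula C).neg).neg
  | Formula.or A B => (((dnt A).neg).and ((dnt B).neg)).neg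
  | Formula.and A B => (dnt A).and (dnt B)
  | Formula.imp A B => (dnt A).imp (dnt B)
  | Formula.dia x A => (Formula.box x ((dnt A).neg)).neg
  | Formula.box x A => Formula.box x (dnt A)

/-! ### The classical language and calculi -/

/-- Formulae of the classical language `L^C_Σ` (negation normal form). -/
inductive CForm (C : Type) : Type
  | pos : ℕ → CForm C
  | neg : ℕ → CForm C
  | or  : CForm C → CForm C → CForm C
  | and : CForm C → CForm C → CForm C
  | dia : C → CForm C → CForm C
  | box : C → CForm C → CForm C

/-- Classical negation, recursively extended to all formulae of `L^C_Σ`. -/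
def cneg {C : Type} : CForm C → CForm C
  | CForm.pos p => CForm.neg p
  | CForm.neg p => CForm.pos p
  | CForm.or A B => CForm.and (cneg A) (cneg B)
  | CForm.and A B => CForm.or (cneg A) (cneg B)
  | CForm.dia x A => CForm.box x (cneg A)
  | CForm.box x A => CForm.dia x (cneg A)

/-- `⊥ := p ∧ ¬p` for a fixed propositional atom. -/
def cbot {C : Type} : CForm C := CForm.and (CForm.pos 0) (CForm.neg 0)

/-- `A ⊃ B := ¬A ∨ B`. -/
def cimp {C : Type} (A B : CForm C) : CForm C := CForm.or (cneg A) B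

/-- Reading a formula of `L_Σ` as a formula of `L^C_Σ`. -/
def toC {C : Type} : Formula C → CForm C
  | Formula.atom p => CForm.pos p
  | Formula.bot => cbot
  | Formula.or A B => CForm.or (toC A) (toC B)
  | Formula.and A B => CForm.and (toC A) (toC B)
  | Formula.imp A B => cimp (toC A) (toC B)
  | Formula.dia x A => CForm.dia x (toC A)
  | Formula.box x A => CForm.box x (toC A)

/-- A classical labeled formula. -/
abbrev CLF (C : Type) := ℕ × CForm C

def clfLabels {C : Type} (Γ : Multiset (CLF C)) : Set ℕ :=
  {l | ∃ b ∈ Γ, b.1 = l}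

/-- The refined labeled calculus `L^C_Σ(𝒜)` for the corresponding classical
grammar logic, operating on one-sided sequents `R ⊢ Γ`. -/
inductive CLD (α : Alphabet) (𝒜 : Set (Ax α.Char)) :
    Multiset (Rel α.Char) → Multiset (CLF α.Char) → Prop
  | id (R : Multiset (Rel α.Char)) (Γ : Multiset (CLF α.Char)) (w p : ℕ) :
      CLD α 𝒜 R ((w, CForm.pos p) ::ₘ (w, CForm.neg p) ::ₘ Γ)
  | orR {R : Multiset (Rel α.Char)} {Γ : Multiset (CLF α.Char)} {w : ℕ}
      {A B : CForm α.Char} :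
      CLD α 𝒜 R ((w, A) ::ₘ (w, B) ::ₘ Γ) → CLD α 𝒜 R ((w, CForm.or A B) ::ₘ Γ)
  | andR {R : Multiset (Rel α.Char)} {Γ : Multiset (CLF α.Char)} {w : ℕ}
      {A B : CForm α.Char} :
      CLD α 𝒜 R ((w, A) ::ₘ Γ) → CLD α 𝒜 R ((w, B) ::ₘ Γ) →
      CLD α 𝒜 R ((w, CForm.and A B) ::ₘ Γ)
  | boxR {R : Multiset (Rel α.Char)} {Γ : Multiset (CLF α.Char)} {w u : ℕ}
      {x : α.Char} {A : CForm α.Char}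
      (hf : u ∉ relLabels R ∧ u ∉ clfLabels ((w, CForm.box x A) ::ₘ Γ)) :
      CLD α 𝒜 ((w, x, u) ::ₘ R) ((u, A) ::ₘ Γ) →
      CLD α 𝒜 R ((w, CForm.box x A) ::ₘ Γ)
  | dx {R : Multiset (Rel α.Char)} {Γ : Multiset (CLF α.Char)} {u : ℕ}
      {x : α.Char} (w : ℕ) (hax : Ax.ser x ∈ 𝒜)
      (hf : u ∉ relLabels R ∧ u ∉ clfLabels Γ) :
      CLD α 𝒜 ((w, x, u) ::ₘ R) Γ → CLD α 𝒜 R Γ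
  | diaR {R : Multiset (Rel α.Char)} {Γ : Multiset (CLF α.Char)} {w u : ℕ}
      {x : α.Char} {A : CForm α.Char} (h : CanProp α 𝒜 R w u x) :
      CLD α 𝒜 R ((w, CForm.dia x A) ::ₘ (u, A) ::ₘ Γ) →
      CLD α 𝒜 R ((w, CForm.dia x A) ::ₘ Γ)

/-- `⟨x₁⟩⋯⟨xₙ⟩A` in the classical language. -/
def cdias {C : Type} : List C → CForm C → CForm C
  | [], A => A
  | x :: s, A => CForm.dia x (cdias s A)

/-- The Hilbert system for the classical grammar logic `K_m(Σ,𝒜')` corresponding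
to `IK_m(Σ,𝒜)`: seriality axioms of `𝒜` are kept and each intuitionistic path
axiom contributes the path axiom `⟨x₁⟩⋯⟨xₙ⟩A ⊃ ⟨x⟩A`. -/
inductive Kprf (α : Alphabet) (𝒜 : Set (Ax α.Char)) : CForm α.Char → Prop
  | cpl1 (A B : CForm α.Char) : Kprf α 𝒜 (cimp A (cimp B A))
  | cpl2 (A B C : CForm α.Char) :
      Kprf α 𝒜 (cimp (cimp A (cimp B C)) (cimp (cimp A B) (cimp A C)))
  | cpl3 (A B : CForm α.Char) : Kprf α 𝒜 (cimp A (CForm.or A B))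
  | cpl4 (A B : CForm α.Char) : Kprf α 𝒜 (cimp B (CForm.or A B))
  | cpl5 (A B C : CForm α.Char) :
      Kprf α 𝒜 (cimp (cimp A C) (cimp (cimp B C) (cimp (CForm.or A B) C)))
  | cpl6 (A B : CForm α.Char) : Kprf α 𝒜 (cimp (CForm.and A B) A)
  | cpl7 (A B : CForm α.Char) : Kprf α 𝒜 (cimp (CForm.and A B) B)
  | cpl8 (A B : CForm α.Char) : Kprf α 𝒜 (cimp A (cimp B (CForm.and A B)))
  | cpl9 (A : CForm α.Char) : Kprf α 𝒜 (cimp cbot A)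
  | cpl10 (A : CForm α.Char) : Kprf α 𝒜 (CForm.or A (cneg A))
  | axK (x : α.Char) (A B : CForm α.Char) :
      Kprf α 𝒜 (cimp (CForm.box x (cimp A B)) (cimp (CForm.box x A) (CForm.box x B)))
  | axConv (x : α.Char) (A : CForm α.Char) :
      Kprf α 𝒜 (cimp A (CForm.box x (CForm.dia (α.conv x) A)))
  | axSer (x : α.Char) (A : CForm α.Char) (h : Ax.ser x ∈ 𝒜) :
      Kprf α 𝒜 (cimp (CForm.box x A) (CForm.dia x A))
  | axPath (x : α.Char) (s : List α.Char) (A : CForm α.Char) (h : Ax.ipa x s ∈ 𝒜) :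
      Kprf α 𝒜 (cimp (cdias s A) (CForm.dia x A))
  | mp (A B : CForm α.Char) : Kprf α 𝒜 (cimp A B) → Kprf α 𝒜 A → Kprf α 𝒜 B
  | nec (x : α.Char) (A : CForm α.Char) : Kprf α 𝒜 A → Kprf α 𝒜 (CForm.box x A)

/-- The double-negation translation from `L^C_Σ` into `L_Σ`. -/
def dntC {C : Type} : CForm C → Formula C
  | CForm.pos p => ((Formula.atom p).neg).neg
  | CForm.neg p => (((Formula.atom p).neg).neg).neg
  | CForm.or A B => (((dntC A).neg).and ((dntC B).neg)).neg
  | CForm.and A B => (dntC A).and (dntC B)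
  | CForm.dia x A => (Formula.box x ((dntC A).neg)).neg
  | CForm.box x A => Formula.box x (dntC A)

/-! ### Labeled tree sequents and derivation trees -/

/-- Reachability along the relational atoms of `R`. -/
def Reach {C : Type} (R : Multiset (Rel C)) (a b : ℕ) : Prop :=
  Relation.ReflTransGen (fun p q => ∃ x, (p, x, q) ∈ R) a b

/-- `R, Γ ⊢ w : ⋯` is a labeled tree sequent with root `r`. -/
def isTreeSeqRoot (α : Alphabet) (R : Multiset (Rel α.Char))
    (Γ : Multiset (LF α.Char)) (w r : ℕ) : Prop :=
  (R = 0 → r = w ∧ ∀ b ∈ Γ, b.1 = w) ∧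
  (R ≠ 0 →
    (∀ a ∈ R, a.2.2 ≠ r) ∧
    (∀ l : ℕ, l ≠ r → (R.filter (fun a => a.2.2 = l)).card ≤ 1) ∧
    (∀ l ∈ relLabels R, Reach R r l) ∧
    (∀ b ∈ Γ, b.1 ∈ relLabels R) ∧ w ∈ relLabels R)

/-- Proof trees (derivations) in the refined labeled calculus `L*_Σ(𝒜)`. -/
inductive DTree (α : Alphabet) (𝒜 : Set (Ax α.Char)) :
    Multiset (Rel α.Char) → Multiset (LF α.Char) → ℕ → Formula α.Char → Type
  | id (R : Multiset (Rel α.Char)) (Γ : Multiset (LF α.Char)) (w p : ℕ) :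
      DTree α 𝒜 R ((w, Formula.atom p) ::ₘ Γ) w (Formula.atom p)
  | botL (R : Multiset (Rel α.Char)) (Γ : Multiset (LF α.Char)) (w u : ℕ)
      (A : Formula α.Char) : DTree α 𝒜 R ((w, Formula.bot) ::ₘ Γ) u A
  | orL (R : Multiset (Rel α.Char)) (Γ : Multiset (LF α.Char)) (w u : ℕ)
      (A B C : Formula α.Char) :
      DTree α 𝒜 R ((w, A) ::ₘ Γ) u C → DTree α 𝒜 R ((w, B) ::ₘ Γ) u C →
      DTree α 𝒜 R ((w, A.or B) ::ₘ Γ) u C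
  | orR1 (R : Multiset (Rel α.Char)) (Γ : Multiset (LF α.Char)) (w : ℕ)
      (A B : Formula α.Char) : DTree α 𝒜 R Γ w A → DTree α 𝒜 R Γ w (A.or B)
  | orR2 (R : Multiset (Rel α.Char)) (Γ : Multiset (LF α.Char)) (w : ℕ)
      (A B : Formula α.Char) : DTree α 𝒜 R Γ w B → DTree α 𝒜 R Γ w (A.or B)
  | andL (R : Multiset (Rel α.Char)) (Γ : Multiset (LF α.Char)) (w u : ℕ)
      (A B C : Formula α.Char) :
      DTree α 𝒜 R ((w, A) ::ₘ (w, B) ::ₘ Γ) u C →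
      DTree α 𝒜 R ((w, A.and B) ::ₘ Γ) u C
  | andR (R : Multiset (Rel α.Char)) (Γ : Multiset (LF α.Char)) (w : ℕ)
      (A B : Formula α.Char) :
      DTree α 𝒜 R Γ w A → DTree α 𝒜 R Γ w B → DTree α 𝒜 R Γ w (A.and B)
  | impL (R : Multiset (Rel α.Char)) (Γ : Multiset (LF α.Char)) (w u : ℕ)
      (A B C : Formula α.Char) :
      DTree α 𝒜 R ((w, A.imp B) ::ₘ Γ) w A → DTree α 𝒜 R ((w, B) ::ₘ Γ) u C →
      DTree α 𝒜 R ((w, A.imp B) ::ₘ Γ) u C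
  | impR (R : Multiset (Rel α.Char)) (Γ : Multiset (LF α.Char)) (w : ℕ)
      (A B : Formula α.Char) :
      DTree α 𝒜 R ((w, A) ::ₘ Γ) w B → DTree α 𝒜 R Γ w (A.imp B)
  | diaL (R : Multiset (Rel α.Char)) (Γ : Multiset (LF α.Char)) (w u v : ℕ)
      (x : α.Char) (A B : Formula α.Char)
      (hf : freshIn u R ((w, Formula.dia x A) ::ₘ Γ) v) :
      DTree α 𝒜 ((w, x, u) ::ₘ R) ((u, A) ::ₘ Γ) v B →
      DTree α 𝒜 R ((w, Formula.dia x A) ::ₘ Γ) v B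
  | boxR (R : Multiset (Rel α.Char)) (Γ : Multiset (LF α.Char)) (w u : ℕ)
      (x : α.Char) (A : Formula α.Char) (hf : freshIn u R Γ w) :
      DTree α 𝒜 ((w, x, u) ::ₘ R) Γ u A → DTree α 𝒜 R Γ w (Formula.box x A)
  | dx (R : Multiset (Rel α.Char)) (Γ : Multiset (LF α.Char)) (w u v : ℕ)
      (x : α.Char) (A : Formula α.Char) (hax : Ax.ser x ∈ 𝒜)
      (hf : freshIn u R Γ v) :
      DTree α 𝒜 ((w, x, u) ::ₘ R) Γ v A → DTree α 𝒜 R Γ v A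
  | pdia (R : Multiset (Rel α.Char)) (Γ : Multiset (LF α.Char)) (w u : ℕ)
      (x : α.Char) (A : Formula α.Char) (h : CanProp α 𝒜 R w u x) :
      DTree α 𝒜 R Γ u A → DTree α 𝒜 R Γ w (Formula.dia x A)
  | pbox (R : Multiset (Rel α.Char)) (Γ : Multiset (LF α.Char)) (w u v : ℕ)
      (x : α.Char) (A B : Formula α.Char) (h : CanProp α 𝒜 R w u x) :
      DTree α 𝒜 R ((w, Formula.box x A) ::ₘ (u, A) ::ₘ Γ) v B →
      DTree α 𝒜 R ((w, Formula.box x A) ::ₘ Γ) v B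

/-- `EverySeq P d`: every labeled sequent occurring in the derivation `d`
satisfies `P`. -/
def EverySeq {α : Alphabet} {𝒜 : Set (Ax α.Char)}
    (P : Multiset (Rel α.Char) → Multiset (LF α.Char) → ℕ → Formula α.Char → Prop) :
    ∀ {R : Multiset (Rel α.Char)} {Γ : Multiset (LF α.Char)} {w : ℕ}
      {A : Formula α.Char}, DTree α 𝒜 R Γ w A → Prop
  | _, _, _, _, DTree.id R Γ w p => P R ((w, Formula.atom p) ::ₘ Γ) w (Formula.atom p)
  | _, _, _, _, DTree.botL R Γ w u A => P R ((w, Formula.bot) ::ₘ Γ) u A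
  | _, _, _, _, DTree.orL R Γ w u A B C d1 d2 =>
      P R ((w, A.or B) ::ₘ Γ) u C ∧ EverySeq P d1 ∧ EverySeq P d2
  | _, _, _, _, DTree.orR1 R Γ w A B d => P R Γ w (A.or B) ∧ EverySeq P d
  | _, _, _, _, DTree.orR2 R Γ w A B d => P R Γ w (A.or B) ∧ EverySeq P d
  | _, _, _, _, DTree.andL R Γ w u A B C d =>
      P R ((w, A.and B) ::ₘ Γ) u C ∧ EverySeq P d
  | _, _, _, _, DTree.andR R Γ w A B d1 d2 =>
      P R Γ w (A.and B) ∧ EverySeq P d1 ∧ EverySeq P d2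
  | _, _, _, _, DTree.impL R Γ w u A B C d1 d2 =>
      P R ((w, A.imp B) ::ₘ Γ) u C ∧ EverySeq P d1 ∧ EverySeq P d2
  | _, _, _, _, DTree.impR R Γ w A B d => P R Γ w (A.imp B) ∧ EverySeq P d
  | _, _, _, _, DTree.diaL R Γ w u v x A B _ d =>
      P R ((w, Formula.dia x A) ::ₘ Γ) v B ∧ EverySeq P d
  | _, _, _, _, DTree.boxR R Γ w u x A _ d =>
      P R Γ w (Formula.box x A) ∧ EverySeq P d
  | _, _, _, _, DTree.dx R Γ w u v x A _ _ d => P R Γ v A ∧ EverySeq P d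
  | _, _, _, _, DTree.pdia R Γ w u x A _ d =>
      P R Γ w (Formula.dia x A) ∧ EverySeq P d
  | _, _, _, _, DTree.pbox R Γ w u v x A B _ d =>
      P R ((w, Formula.box x A) ::ₘ Γ) v B ∧ EverySeq P d

/-! ### Auxiliary development for the intuitionistic-to-classical translation -/

section TranslationAux

variable {α : Alphabet} {𝒜 : Set (Ax α.Char)}

/-- Height-indexed version of `CLD`. -/
inductive CLDh (α : Alphabet) (𝒜 : Set (Ax α.Char)) :
    ℕ → Multiset (Rel α.Char) → Multiset (CLF α.Char) → Prop
  | id (n : ℕ) (R : Multiset (Rel α.Char)) (Γ : Multiset (CLF α.Char)) (w p : ℕ) :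
      CLDh α 𝒜 n R ((w, CForm.pos p) ::ₘ (w, CForm.neg p) ::ₘ Γ)
  | orR {n : ℕ} {R : Multiset (Rel α.Char)} {Γ : Multiset (CLF α.Char)} {w : ℕ}
      {A B : CForm α.Char} :
      CLDh α 𝒜 n R ((w, A) ::ₘ (w, B) ::ₘ Γ) →
      CLDh α 𝒜 (n + 1) R ((w, CForm.or A B) ::ₘ Γ)
  | andR {n : ℕ} {R : Multiset (Rel α.Char)} {Γ : Multiset (CLF α.Char)} {w : ℕ}
      {A B : CForm α.Char} :
      CLDh α 𝒜 n R ((w, A) ::ₘ Γ) → CLDh α 𝒜 n R ((w, B) ::ₘ Γ) →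
      CLDh α 𝒜 (n + 1) R ((w, CForm.and A B) ::ₘ Γ)
  | boxR {n : ℕ} {R : Multiset (Rel α.Char)} {Γ : Multiset (CLF α.Char)} {w u : ℕ}
      {x : α.Char} {A : CForm α.Char}
      (hf : u ∉ relLabels R ∧ u ∉ clfLabels ((w, CForm.box x A) ::ₘ Γ)) :
      CLDh α 𝒜 n ((w, x, u) ::ₘ R) ((u, A) ::ₘ Γ) →
      CLDh α 𝒜 (n + 1) R ((w, CForm.box x A) ::ₘ Γ)
  | dx {n : ℕ} {R : Multiset (Rel α.Char)} {Γ : Multiset (CLF α.Char)} {u : ℕ}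
      {x : α.Char} (w : ℕ) (hax : Ax.ser x ∈ 𝒜)
      (hf : u ∉ relLabels R ∧ u ∉ clfLabels Γ) :
      CLDh α 𝒜 n ((w, x, u) ::ₘ R) Γ → CLDh α 𝒜 (n + 1) R Γ
  | diaR {n : ℕ} {R : Multiset (Rel α.Char)} {Γ : Multiset (CLF α.Char)} {w u : ℕ}
      {x : α.Char} {A : CForm α.Char} (h : CanProp α 𝒜 R w u x) :
      CLDh α 𝒜 n R ((w, CForm.dia x A) ::ₘ (u, A) ::ₘ Γ) →
      CLDh α 𝒜 (n + 1) R ((w, CForm.dia x A) ::ₘ Γ)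

lemma CLDh.toCLD {n : ℕ} {R : Multiset (Rel α.Char)} {Γ : Multiset (CLF α.Char)}
    (h : CLDh α 𝒜 n R Γ) : CLD α 𝒜 R Γ := by
  induction h with
  | id => exact CLD.id _ _ _ _
  | orR _ ih => exact CLD.orR ih
  | andR _ _ ih1 ih2 => exact CLD.andR ih1 ih2
  | boxR hf _ ih => exact CLD.boxR hf ih
  | dx w hax hf _ ih => exact CLD.dx w hax hf ih
  | diaR h _ ih => exact CLD.diaR h ih

lemma CLDh.succ {n : ℕ} {R : Multiset (Rel α.Char)} {Γ : Multiset (CLF α.Char)}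
    (h : CLDh α 𝒜 n R Γ) : CLDh α 𝒜 (n + 1) R Γ := by
  induction h with
  | id => exact CLDh.id _ _ _ _ _
  | orR _ ih => exact CLDh.orR ih
  | andR _ _ ih1 ih2 => exact CLDh.andR ih1 ih2
  | boxR hf _ ih => exact CLDh.boxR hf ih
  | dx w hax hf _ ih => exact CLDh.dx w hax hf ih
  | diaR h _ ih => exact CLDh.diaR h ih

lemma CLDh.le {n m : ℕ} {R : Multiset (Rel α.Char)} {Γ : Multiset (CLF α.Char)}
    (hnm : n ≤ m) (h : CLDh α 𝒜 n R Γ) : CLDh α 𝒜 m R Γ := by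
  induction hnm with
  | refl => exact h
  | step _ ih => exact ih.succ

lemma CLD.toh {R : Multiset (Rel α.Char)} {Γ : Multiset (CLF α.Char)}
    (h : CLD α 𝒜 R Γ) : ∃ n, CLDh α 𝒜 n R Γ := by
  induction h with
  | id => exact ⟨0, CLDh.id _ _ _ _ _⟩
  | orR _ ih => obtain ⟨n, hn⟩ := ih; exact ⟨n + 1, CLDh.orR hn⟩
  | andR _ _ ih1 ih2 =>
      obtain ⟨n, hn⟩ := ih1; obtain ⟨m, hm⟩ := ih2
      exact ⟨max n m + 1, CLDh.andR (hn.le (le_max_left _ _)) (hm.le (le_max_right _ _))⟩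
  | boxR hf _ ih => obtain ⟨n, hn⟩ := ih; exact ⟨n + 1, CLDh.boxR hf hn⟩
  | dx w hax hf _ ih => obtain ⟨n, hn⟩ := ih; exact ⟨n + 1, CLDh.dx w hax hf hn⟩
  | diaR h _ ih => obtain ⟨n, hn⟩ := ih; exact ⟨n + 1, CLDh.diaR h hn⟩

/-! #### Labels -/

lemma mem_relLabels_cons {C : Type} {a : ℕ} {x : C} {b l : ℕ} {R : Multiset (Rel C)} :
    l ∈ relLabels ((a, x, b) ::ₘ R) ↔ l = a ∨ l = b ∨ l ∈ relLabels R := by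
  simp only [relLabels, Set.mem_setOf_eq, Multiset.mem_cons]
  constructor
  · rintro ⟨e, (rfl | he), h⟩
    · rcases h with h | h
      · exact Or.inl h.symm
      · exact Or.inr (Or.inl h.symm)
    · exact Or.inr (Or.inr ⟨e, he, h⟩)
  · rintro (rfl | rfl | ⟨e, he, h⟩)
    · exact ⟨(l, x, b), Or.inl rfl, Or.inl rfl⟩
    · exact ⟨(a, x, l), Or.inl rfl, Or.inr rfl⟩
    · exact ⟨e, Or.inr he, h⟩

lemma mem_clfLabels_cons {C : Type} {w l : ℕ} {A : CForm C} {Γ : Multiset (CLF C)} :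
    l ∈ clfLabels ((w, A) ::ₘ Γ) ↔ l = w ∨ l ∈ clfLabels Γ := by
  simp only [clfLabels, Set.mem_setOf_eq, Multiset.mem_cons]
  constructor
  · rintro ⟨b, (rfl | hb), h⟩
    · exact Or.inl h.symm
    · exact Or.inr ⟨b, hb, h⟩
  · rintro (rfl | ⟨b, hb, h⟩)
    · exact ⟨(l, A), Or.inl rfl, rfl⟩
    · exact ⟨b, Or.inr hb, h⟩

lemma mem_lfLabels_cons {C : Type} {w l : ℕ} {A : Formula C} {Γ : Multiset (LF C)} :
    l ∈ lfLabels ((w, A) ::ₘ Γ) ↔ l = w ∨ l ∈ lfLabels Γ := by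
  simp only [lfLabels, Set.mem_setOf_eq, Multiset.mem_cons]
  constructor
  · rintro ⟨b, (rfl | hb), h⟩
    · exact Or.inl h.symm
    · exact Or.inr ⟨b, hb, h⟩
  · rintro (rfl | ⟨b, hb, h⟩)
    · exact ⟨(l, A), Or.inl rfl, rfl⟩
    · exact ⟨b, Or.inr hb, h⟩

/-! #### Fresh labels -/

/-- A label strictly larger than everything in sight. -/
def bnd (R : Multiset (Rel α.Char)) (Γ : Multiset (CLF α.Char)) (L : List ℕ) : ℕ :=
  (R.map (fun a => a.1 + a.2.2)).sum + (Γ.map Prod.fst).sum + L.sum + 1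

lemma bnd_rel {R : Multiset (Rel α.Char)} {Γ : Multiset (CLF α.Char)} {L : List ℕ}
    {l : ℕ} (h : l ∈ relLabels R) : l < bnd R Γ L := by
  obtain ⟨a, ha, hl⟩ := h
  have h1 : a.1 + a.2.2 ≤ (R.map (fun a => a.1 + a.2.2)).sum :=
    Multiset.le_sum_of_mem (Multiset.mem_map_of_mem (fun a : Rel α.Char => a.1 + a.2.2) ha)
  have : l ≤ a.1 + a.2.2 := by rcases hl with rfl | rfl <;> omega
  unfold bnd; omega

lemma bnd_clf {R : Multiset (Rel α.Char)} {Γ : Multiset (CLF α.Char)} {L : List ℕ}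
    {l : ℕ} (h : l ∈ clfLabels Γ) : l < bnd R Γ L := by
  obtain ⟨b, hb, rfl⟩ := h
  have h1 : b.1 ≤ (Γ.map Prod.fst).sum :=
    Multiset.le_sum_of_mem (Multiset.mem_map_of_mem _ hb)
  unfold bnd; omega

lemma bnd_list {R : Multiset (Rel α.Char)} {Γ : Multiset (CLF α.Char)} {L : List ℕ}
    {l : ℕ} (h : l ∈ L) : l < bnd R Γ L := by
  have h1 : l ≤ L.sum := List.le_sum_of_mem h
  unfold bnd; omega

lemma bnd_not_rel {R : Multiset (Rel α.Char)} {Γ : Multiset (CLF α.Char)} {L : List ℕ} :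
    bnd R Γ L ∉ relLabels R := fun h => lt_irrefl _ (bnd_rel (Γ := Γ) (L := L) h)

lemma bnd_not_clf {R : Multiset (Rel α.Char)} {Γ : Multiset (CLF α.Char)} {L : List ℕ} :
    bnd R Γ L ∉ clfLabels Γ := fun h => lt_irrefl _ (bnd_clf (R := R) (L := L) h)

lemma bnd_ne {R : Multiset (Rel α.Char)} {Γ : Multiset (CLF α.Char)} {L : List ℕ}
    {l : ℕ} (h : l ∈ L) : bnd R Γ L ≠ l := fun e => lt_irrefl _ (e ▸ bnd_list (R := R) (Γ := Γ) h)

/-! #### Substitution basics -/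

/-- Label substitution on classical labeled formulae. -/
def subC {C : Type} (v u : ℕ) (Γ : Multiset (CLF C)) : Multiset (CLF C) :=
  Γ.map (fun b => (subL v u b.1, b.2))

lemma subL_ne {v u l : ℕ} (h : l ≠ v) : subL v u l = l := if_neg h

lemma subL_self {v u : ℕ} : subL v u v = u := if_pos rfl

lemma subR_cons {C : Type} {v u a : ℕ} {x : C} {b : ℕ} {R : Multiset (Rel C)} :
    subR v u ((a, x, b) ::ₘ R) = (subL v u a, x, subL v u b) ::ₘ subR v u R := by
  simp [subR]

lemma subC_cons {C : Type} {v u w : ℕ} {A : CForm C} {Γ : Multiset (CLF C)} :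
    subC v u ((w, A) ::ₘ Γ) = (subL v u w, A) ::ₘ subC v u Γ := by
  simp [subC]

lemma subR_fresh {v u : ℕ} {R : Multiset (Rel α.Char)} (h : v ∉ relLabels R) :
    subR v u R = R := by
  have : ∀ a ∈ R, (subL v u a.1, a.2.1, subL v u a.2.2) = a := by
    intro a ha
    have h1 : a.1 ≠ v := fun e => h ⟨a, ha, Or.inl e⟩
    have h2 : a.2.2 ≠ v := fun e => h ⟨a, ha, Or.inr e⟩
    simp [subL_ne h1, subL_ne h2]
  calc subR v u R = R.map id := Multiset.map_congr rfl (by intro a ha; exact this a ha)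
    _ = R := Multiset.map_id R

lemma subC_fresh {v u : ℕ} {Γ : Multiset (CLF α.Char)} (h : v ∉ clfLabels Γ) :
    subC v u Γ = Γ := by
  have : ∀ b ∈ Γ, (subL v u b.1, b.2) = b := by
    intro b hb
    have h1 : b.1 ≠ v := fun e => h ⟨b, hb, e⟩
    simp [subL_ne h1]
  calc subC v u Γ = Γ.map id := Multiset.map_congr rfl (by intro b hb; exact this b hb)
    _ = Γ := Multiset.map_id Γ

/-! #### Propagation paths -/

lemma PGEdge.congr {R R' : Multiset (Rel α.Char)} (h : ∀ e, e ∈ R → e ∈ R')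
    {a : ℕ} {x : α.Char} {b : ℕ} (he : PGEdge α R a x b) : PGEdge α R' a x b := by
  rcases he with he | he
  · exact Or.inl (h _ he)
  · exact Or.inr (h _ he)

lemma PPath.congr {R R' : Multiset (Rel α.Char)} (h : ∀ e, e ∈ R → e ∈ R')
    {a b : ℕ} {s : List α.Char} (hp : PPath α R a b s) : PPath α R' a b s := by
  induction hp with
  | nil w => exact PPath.nil w
  | cons he _ ih => exact PPath.cons (he.congr h) ih

lemma CanProp.congr {R R' : Multiset (Rel α.Char)} (h : ∀ e, e ∈ R → e ∈ R')
    {w u : ℕ} {x : α.Char} (hc : CanProp α 𝒜 R w u x) : CanProp α 𝒜 R' w u x := by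
  obtain ⟨s, hp, hs⟩ := hc; exact ⟨s, hp.congr h, hs⟩

lemma PGEdge.sub {v u : ℕ} {R : Multiset (Rel α.Char)} {a : ℕ} {x : α.Char} {b : ℕ}
    (he : PGEdge α R a x b) : PGEdge α (subR v u R) (subL v u a) x (subL v u b) := by
  rcases he with he | he
  · exact Or.inl (Multiset.mem_map_of_mem _ he)
  · exact Or.inr (Multiset.mem_map_of_mem _ he)

lemma PPath.sub {v u : ℕ} {R : Multiset (Rel α.Char)} {a b : ℕ} {s : List α.Char}
    (hp : PPath α R a b s) : PPath α (subR v u R) (subL v u a) (subL v u b) s := by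
  induction hp with
  | nil w => exact PPath.nil _
  | cons he _ ih => exact PPath.cons (he.sub (v := v) (u := u)) ih

lemma CanProp.sub {v u : ℕ} {R : Multiset (Rel α.Char)} {w z : ℕ} {x : α.Char}
    (hc : CanProp α 𝒜 R w z x) : CanProp α 𝒜 (subR v u R) (subL v u w) (subL v u z) x := by
  obtain ⟨s, hp, hs⟩ := hc; exact ⟨s, hp.sub, hs⟩

lemma PPath.end_mem {R : Multiset (Rel α.Char)} {a b : ℕ} {s : List α.Char}
    (hp : PPath α R a b s) : b = a ∨ b ∈ relLabels R := by
  induction hp with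
  | nil w => exact Or.inl rfl
  | cons he hp' ih =>
      right
      rcases ih with rfl | hb
      · rcases he with he | he
        · exact ⟨_, he, Or.inr rfl⟩
        · exact ⟨_, he, Or.inl rfl⟩
      · exact hb

end TranslationAux

section TranslationAux2

variable {α : Alphabet} {𝒜 : Set (Ax α.Char)}

/-- Height-preserving admissibility of label substitution in `CLDh`. -/
lemma CLDh.sub : ∀ n : ℕ, ∀ (R : Multiset (Rel α.Char)) (Γ : Multiset (CLF α.Char)) (a b : ℕ),
    CLDh α 𝒜 n R Γ → CLDh α 𝒜 n (subR a b R) (subC a b Γ) := by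
  intro n
  induction n using Nat.strong_induction_on with
  | _ n IH =>
    intro R Γ a b h
    cases h with
    | id n R Γ w p =>
        rw [subC_cons, subC_cons]; exact CLDh.id _ _ _ _ _
    | orR h1 =>
        rw [subC_cons]
        refine CLDh.orR ?_
        have := IH _ (Nat.lt_succ_self _) _ _ a b h1
        rwa [subC_cons, subC_cons] at this
    | andR h1 h2 =>
        rw [subC_cons]
        refine CLDh.andR ?_ ?_
        · have := IH _ (Nat.lt_succ_self _) _ _ a b h1; rwa [subC_cons] at this
        · have := IH _ (Nat.lt_succ_self _) _ _ a b h2; rwa [subC_cons] at this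
    | diaR hp h1 =>
        rw [subC_cons]
        refine CLDh.diaR hp.sub ?_
        have := IH _ (Nat.lt_succ_self _) _ _ a b h1
        rwa [subC_cons, subC_cons] at this
    | boxR hf h1 =>
        rename_i m Γ' w u x A
        have huw : w ≠ u := fun e => hf.2 (mem_clfLabels_cons.mpr (Or.inl e.symm))
        have huΓ : u ∉ clfLabels Γ' := fun e => hf.2 (mem_clfLabels_cons.mpr (Or.inr e))
        set u2 := bnd (subR a b R) (subC a b ((w, CForm.box x A) ::ₘ Γ')) [a] with hu2
        have h2 := IH _ (Nat.lt_succ_self _) _ _ u u2 h1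
        rw [subR_cons, subR_fresh hf.1, subL_self, subL_ne huw, subC_cons, subL_self,
          subC_fresh huΓ] at h2
        have h3 := IH _ (Nat.lt_succ_self _) _ _ a b h2
        rw [subR_cons, subC_cons, subL_ne (bnd_ne (by simp))] at h3
        rw [subC_cons]
        refine CLDh.boxR ⟨bnd_not_rel, ?_⟩ h3
        have e : (subL a b w, CForm.box x A) ::ₘ subC a b Γ' =
            subC a b ((w, CForm.box x A) ::ₘ Γ') := subC_cons.symm
        rw [e]; exact bnd_not_clf
    | dx w hax hf h1 =>
        rename_i m u x
        set u2 := bnd (subR a b R) (subC a b Γ) [a] with hu2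
        have h2 := IH _ (Nat.lt_succ_self _) _ _ u u2 h1
        rw [subR_cons, subR_fresh hf.1, subL_self, subC_fresh hf.2] at h2
        have h3 := IH _ (Nat.lt_succ_self _) _ _ a b h2
        rw [subR_cons, subL_ne (bnd_ne (by simp))] at h3
        exact CLDh.dx _ hax ⟨bnd_not_rel, bnd_not_clf⟩ h3

/-- Height-preserving admissibility of weakening in `CLDh`. -/
lemma CLDh.weak : ∀ n : ℕ, ∀ (R : Multiset (Rel α.Char)) (Γ Θ : Multiset (CLF α.Char)),
    CLDh α 𝒜 n R Γ → CLDh α 𝒜 n R (Γ + Θ) := by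
  intro n
  induction n using Nat.strong_induction_on with
  | _ n IH =>
    intro R Γ Θ h
    cases h with
    | id n R Γ w p =>
        rw [Multiset.cons_add, Multiset.cons_add]; exact CLDh.id _ _ _ _ _
    | orR h1 =>
        rw [Multiset.cons_add]
        refine CLDh.orR ?_
        have := IH _ (Nat.lt_succ_self _) _ _ Θ h1
        rwa [Multiset.cons_add, Multiset.cons_add] at this
    | andR h1 h2 =>
        rw [Multiset.cons_add]
        refine CLDh.andR ?_ ?_
        · have := IH _ (Nat.lt_succ_self _) _ _ Θ h1; rwa [Multiset.cons_add] at this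
        · have := IH _ (Nat.lt_succ_self _) _ _ Θ h2; rwa [Multiset.cons_add] at this
    | diaR hp h1 =>
        rw [Multiset.cons_add]
        refine CLDh.diaR hp ?_
        have := IH _ (Nat.lt_succ_self _) _ _ Θ h1
        rwa [Multiset.cons_add, Multiset.cons_add] at this
    | boxR hf h1 =>
        rename_i m Γ' w u x A
        have huw : w ≠ u := fun e => hf.2 (mem_clfLabels_cons.mpr (Or.inl e.symm))
        have huΓ : u ∉ clfLabels Γ' := fun e => hf.2 (mem_clfLabels_cons.mpr (Or.inr e))
        set u2 := bnd R ((w, CForm.box x A) ::ₘ (Γ' + Θ)) [] with hu2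
        have h2 := CLDh.sub m _ _ u u2 h1
        rw [subR_cons, subR_fresh hf.1, subL_self, subL_ne huw, subC_cons, subL_self,
          subC_fresh huΓ] at h2
        have h3 := IH _ (Nat.lt_succ_self _) _ _ Θ h2
        rw [Multiset.cons_add] at h3
        rw [Multiset.cons_add]
        exact CLDh.boxR ⟨bnd_not_rel, bnd_not_clf⟩ h3
    | dx w hax hf h1 =>
        rename_i m u x
        set u2 := bnd R (Γ + Θ) [] with hu2
        have h2 := CLDh.sub m _ _ u u2 h1
        rw [subR_cons, subR_fresh hf.1, subL_self, subC_fresh hf.2] at h2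
        have h3 := IH _ (Nat.lt_succ_self _) _ _ Θ h2
        exact CLDh.dx _ hax ⟨bnd_not_rel, bnd_not_clf⟩ h3

end TranslationAux2

section TranslationAux3

variable {α : Alphabet} {𝒜 : Set (Ax α.Char)}

lemma ms_rot3 {γ : Type} (a b c : γ) (s : Multiset γ) :
    a ::ₘ b ::ₘ c ::ₘ s = c ::ₘ a ::ₘ b ::ₘ s := by
  rw [Multiset.cons_swap b c, Multiset.cons_swap a c]

lemma ms_rot3' {γ : Type} (a b c : γ) (s : Multiset γ) :
    a ::ₘ b ::ₘ c ::ₘ s = b ::ₘ c ::ₘ a ::ₘ s := by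
  rw [Multiset.cons_swap a b, Multiset.cons_swap a c]

lemma ms_rot4 {γ : Type} (a b c d : γ) (s : Multiset γ) :
    a ::ₘ b ::ₘ c ::ₘ d ::ₘ s = d ::ₘ a ::ₘ b ::ₘ c ::ₘ s := by
  rw [Multiset.cons_swap c d, Multiset.cons_swap b d, Multiset.cons_swap a d]

lemma ms_swap22 {γ : Type} (a b c d : γ) (s : Multiset γ) :
    a ::ₘ b ::ₘ c ::ₘ d ::ₘ s = c ::ₘ d ::ₘ a ::ₘ b ::ₘ s :=
  (ms_rot4 a b c d s).trans (ms_rot4 d a b c s)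

lemma CLDh.perm {n : ℕ} {R : Multiset (Rel α.Char)} {Γ Δ : Multiset (CLF α.Char)}
    (e : Γ = Δ) (h : CLDh α 𝒜 n R Γ) : CLDh α 𝒜 n R Δ := e ▸ h

lemma CLDh.permR {n : ℕ} {R R' : Multiset (Rel α.Char)} {Γ : Multiset (CLF α.Char)}
    (e : R = R') (h : CLDh α 𝒜 n R Γ) : CLDh α 𝒜 n R' Γ := e ▸ h

lemma cldh_pair {n : ℕ} {R : Multiset (Rel α.Char)} {Δ : Multiset (CLF α.Char)}
    {w p : ℕ} (h1 : (w, (CForm.pos p : CForm α.Char)) ∈ Δ)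
    (h2 : (w, (CForm.neg p : CForm α.Char)) ∈ Δ) : CLDh α 𝒜 n R Δ := by
  obtain ⟨Δ1, rfl⟩ := Multiset.exists_cons_of_mem h1
  have h2' : (w, (CForm.neg p : CForm α.Char)) ∈ Δ1 := by
    rcases Multiset.mem_cons.mp h2 with e | e
    · exact absurd e (by simp)
    · exact e
  obtain ⟨Δ2, rfl⟩ := Multiset.exists_cons_of_mem h2'
  exact CLDh.id _ _ _ _ _

lemma cons_ne_cases {γ : Type} {a c : γ} {s t : Multiset γ} (e : a ::ₘ s = c ::ₘ t)
    (h : a ≠ c) : ∃ u, s = c ::ₘ u ∧ t = a ::ₘ u := by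
  rcases Multiset.cons_eq_cons.mp e with ⟨rfl, _⟩ | ⟨_, u, h1, h2⟩
  · exact absurd rfl h
  · exact ⟨u, h1, h2⟩

lemma cons_cons_cases {γ : Type} {p c : γ} {Γ0 Γ : Multiset γ}
    (e : p ::ₘ Γ0 = c ::ₘ c ::ₘ Γ) :
    (p = c ∧ Γ0 = c ::ₘ Γ) ∨ (∃ ds, Γ0 = c ::ₘ c ::ₘ ds ∧ Γ = p ::ₘ ds) := by
  rcases Multiset.cons_eq_cons.mp e with ⟨rfl, h⟩ | ⟨hne, cs, h1, h2⟩
  · exact Or.inl ⟨rfl, h⟩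
  · obtain ⟨ds, hΓ, hcs⟩ := cons_ne_cases h2 (fun e' => hne e'.symm)
    exact Or.inr ⟨ds, by rw [h1, hcs], hΓ⟩

lemma mem_dedup {γ : Type} {a c : γ} {Γ : Multiset γ} (h : a ∈ c ::ₘ c ::ₘ Γ) :
    a ∈ c ::ₘ Γ := by
  rcases Multiset.mem_cons.mp h with h' | h'
  · exact Multiset.mem_cons.mpr (Or.inl h')
  · exact h'

/-- Height-preserving invertibility of the `or` rule. -/
lemma or_inv : ∀ n : ℕ, ∀ (R : Multiset (Rel α.Char)) (Δ : Multiset (CLF α.Char)),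
    CLDh α 𝒜 n R Δ → ∀ (w : ℕ) (X Y : CForm α.Char) (Γ : Multiset (CLF α.Char)),
    Δ = (w, CForm.or X Y) ::ₘ Γ → CLDh α 𝒜 n R ((w, X) ::ₘ (w, Y) ::ₘ Γ) := by
  intro n
  induction n using Nat.strong_induction_on with
  | _ n IH =>
    intro R Δ h w X Y Γ e
    cases h with
    | id m R0 Γ0 w0 p =>
        refine cldh_pair (w := w0) (p := p) ?_ ?_
        · have hm : (w0, (CForm.pos p : CForm α.Char)) ∈ (w, CForm.or X Y) ::ₘ Γ := by
            rw [← e]; simp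
          rcases Multiset.mem_cons.mp hm with h' | h'
          · simp at h'
          · exact Multiset.mem_cons_of_mem (Multiset.mem_cons_of_mem h')
        · have hm : (w0, (CForm.neg p : CForm α.Char)) ∈ (w, CForm.or X Y) ::ₘ Γ := by
            rw [← e]; simp
          rcases Multiset.mem_cons.mp hm with h' | h'
          · simp at h'
          · exact Multiset.mem_cons_of_mem (Multiset.mem_cons_of_mem h')
    | orR h1 =>
        rename_i m Γ0 w0 A B
        rcases Multiset.cons_eq_cons.mp e with ⟨he, rfl⟩ | ⟨hne, cs, h1', h2'⟩
        · simp only [Prod.mk.injEq, CForm.or.injEq] at he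
          obtain ⟨rfl, rfl, rfl⟩ := he
          exact h1.succ
        · subst h1'; subst h2'
          have g := IH m (Nat.lt_succ_self m) R _ h1 w X Y ((w0, A) ::ₘ (w0, B) ::ₘ cs)
            (ms_rot3 _ _ _ _)
          have g2 := CLDh.orR (CLDh.perm (ms_swap22 _ _ _ _ _) g)
          exact CLDh.perm (ms_rot3 _ _ _ _).symm g2
    | andR h1 h2 =>
        rename_i m Γ0 w0 A B
        rcases Multiset.cons_eq_cons.mp e with ⟨he, rfl⟩ | ⟨hne, cs, h1', h2'⟩
        · simp at he
        · subst h1'; subst h2'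
          have g1 := IH m (Nat.lt_succ_self m) R _ h1 w X Y ((w0, A) ::ₘ cs)
            (Multiset.cons_swap _ _ _)
          have g2 := IH m (Nat.lt_succ_self m) R _ h2 w X Y ((w0, B) ::ₘ cs)
            (Multiset.cons_swap _ _ _)
          have g3 := CLDh.andR (CLDh.perm (ms_rot3 _ _ _ _) g1)
            (CLDh.perm (ms_rot3 _ _ _ _) g2)
          exact CLDh.perm (ms_rot3 _ _ _ _).symm g3
    | boxR hf h1 =>
        rename_i m Γ0 w0 u x A
        rcases Multiset.cons_eq_cons.mp e with ⟨he, _⟩ | ⟨hne, cs, h1', h2'⟩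
        · simp at he
        · subst h1'; subst h2'
          have g := IH m (Nat.lt_succ_self m) _ _ h1 w X Y ((u, A) ::ₘ cs)
            (Multiset.cons_swap _ _ _)
          have hf' : u ∉ relLabels R ∧
              u ∉ clfLabels ((w0, CForm.box x A) ::ₘ (w, X) ::ₘ (w, Y) ::ₘ cs) := by
            refine ⟨hf.1, ?_⟩
            have := hf.2
            simp only [mem_clfLabels_cons] at this ⊢
            tauto
          have g2 := CLDh.boxR hf' (CLDh.perm (ms_rot3 _ _ _ _) g)
          exact CLDh.perm (ms_rot3 _ _ _ _).symm g2
    | dx w0 hax hf h1 =>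
        rename_i m u x
        subst e
        have g := IH m (Nat.lt_succ_self m) _ _ h1 w X Y Γ rfl
        refine CLDh.dx w0 hax ⟨hf.1, ?_⟩ g
        have := hf.2
        simp only [mem_clfLabels_cons] at this ⊢
        tauto
    | diaR hp h1 =>
        rename_i m Γ0 w0 u x A
        rcases Multiset.cons_eq_cons.mp e with ⟨he, _⟩ | ⟨hne, cs, h1', h2'⟩
        · simp at he
        · subst h1'; subst h2'
          have g := IH m (Nat.lt_succ_self m) _ _ h1 w X Y
            ((w0, CForm.dia x A) ::ₘ (u, A) ::ₘ cs) (ms_rot3 _ _ _ _)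
          have g2 := CLDh.diaR hp (CLDh.perm (ms_swap22 _ _ _ _ _) g)
          exact CLDh.perm (ms_rot3 _ _ _ _).symm g2

/-- Height-preserving invertibility of the `and` rule (left component). -/
lemma and_inv_l : ∀ n : ℕ, ∀ (R : Multiset (Rel α.Char)) (Δ : Multiset (CLF α.Char)),
    CLDh α 𝒜 n R Δ → ∀ (w : ℕ) (X Y : CForm α.Char) (Γ : Multiset (CLF α.Char)),
    Δ = (w, CForm.and X Y) ::ₘ Γ → CLDh α 𝒜 n R ((w, X) ::ₘ Γ) := by
  intro n
  induction n using Nat.strong_induction_on with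
  | _ n IH =>
    intro R Δ h w X Y Γ e
    cases h with
    | id m R0 Γ0 w0 p =>
        refine cldh_pair (w := w0) (p := p) ?_ ?_
        · have hm : (w0, (CForm.pos p : CForm α.Char)) ∈ (w, CForm.and X Y) ::ₘ Γ := by
            rw [← e]; simp
          rcases Multiset.mem_cons.mp hm with h' | h'
          · simp at h'
          · exact Multiset.mem_cons_of_mem h'
        · have hm : (w0, (CForm.neg p : CForm α.Char)) ∈ (w, CForm.and X Y) ::ₘ Γ := by
            rw [← e]; simp
          rcases Multiset.mem_cons.mp hm with h' | h'
          · simp at h'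
          · exact Multiset.mem_cons_of_mem h'
    | orR h1 =>
        rename_i m Γ0 w0 A B
        rcases Multiset.cons_eq_cons.mp e with ⟨he, rfl⟩ | ⟨hne, cs, h1', h2'⟩
        · simp at he
        · subst h1'; subst h2'
          have g := IH m (Nat.lt_succ_self m) R _ h1 w X Y ((w0, A) ::ₘ (w0, B) ::ₘ cs)
            (ms_rot3 _ _ _ _)
          have g2 := CLDh.orR (CLDh.perm (ms_rot3 _ _ _ _).symm g)
          exact CLDh.perm (Multiset.cons_swap _ _ _) g2
    | andR h1 h2 =>
        rename_i m Γ0 w0 A B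
        rcases Multiset.cons_eq_cons.mp e with ⟨he, rfl⟩ | ⟨hne, cs, h1', h2'⟩
        · simp only [Prod.mk.injEq, CForm.and.injEq] at he
          obtain ⟨rfl, rfl, rfl⟩ := he
          exact h1.succ
        · subst h1'; subst h2'
          have g1 := IH m (Nat.lt_succ_self m) R _ h1 w X Y ((w0, A) ::ₘ cs)
            (Multiset.cons_swap _ _ _)
          have g2 := IH m (Nat.lt_succ_self m) R _ h2 w X Y ((w0, B) ::ₘ cs)
            (Multiset.cons_swap _ _ _)
          have g3 := CLDh.andR (CLDh.perm (Multiset.cons_swap _ _ _) g1)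
            (CLDh.perm (Multiset.cons_swap _ _ _) g2)
          exact CLDh.perm (Multiset.cons_swap _ _ _) g3
    | boxR hf h1 =>
        rename_i m Γ0 w0 u x A
        rcases Multiset.cons_eq_cons.mp e with ⟨he, _⟩ | ⟨hne, cs, h1', h2'⟩
        · simp at he
        · subst h1'; subst h2'
          have g := IH m (Nat.lt_succ_self m) _ _ h1 w X Y ((u, A) ::ₘ cs)
            (Multiset.cons_swap _ _ _)
          have hf' : u ∉ relLabels R ∧
              u ∉ clfLabels ((w0, CForm.box x A) ::ₘ (w, X) ::ₘ cs) := by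
            refine ⟨hf.1, ?_⟩
            have := hf.2
            simp only [mem_clfLabels_cons] at this ⊢
            tauto
          have g2 := CLDh.boxR hf' (CLDh.perm (Multiset.cons_swap _ _ _) g)
          exact CLDh.perm (Multiset.cons_swap _ _ _) g2
    | dx w0 hax hf h1 =>
        rename_i m u x
        subst e
        have g := IH m (Nat.lt_succ_self m) _ _ h1 w X Y Γ rfl
        refine CLDh.dx w0 hax ⟨hf.1, ?_⟩ g
        have := hf.2
        simp only [mem_clfLabels_cons] at this ⊢
        tauto
    | diaR hp h1 =>
        rename_i m Γ0 w0 u x A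
        rcases Multiset.cons_eq_cons.mp e with ⟨he, _⟩ | ⟨hne, cs, h1', h2'⟩
        · simp at he
        · subst h1'; subst h2'
          have g := IH m (Nat.lt_succ_self m) _ _ h1 w X Y
            ((w0, CForm.dia x A) ::ₘ (u, A) ::ₘ cs) (ms_rot3 _ _ _ _)
          have g2 := CLDh.diaR hp (CLDh.perm (ms_rot3 _ _ _ _).symm g)
          exact CLDh.perm (Multiset.cons_swap _ _ _) g2

/-- Height-preserving invertibility of the `and` rule (right component). -/
lemma and_inv_r : ∀ n : ℕ, ∀ (R : Multiset (Rel α.Char)) (Δ : Multiset (CLF α.Char)),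
    CLDh α 𝒜 n R Δ → ∀ (w : ℕ) (X Y : CForm α.Char) (Γ : Multiset (CLF α.Char)),
    Δ = (w, CForm.and X Y) ::ₘ Γ → CLDh α 𝒜 n R ((w, Y) ::ₘ Γ) := by
  intro n
  induction n using Nat.strong_induction_on with
  | _ n IH =>
    intro R Δ h w X Y Γ e
    cases h with
    | id m R0 Γ0 w0 p =>
        refine cldh_pair (w := w0) (p := p) ?_ ?_
        · have hm : (w0, (CForm.pos p : CForm α.Char)) ∈ (w, CForm.and X Y) ::ₘ Γ := by
            rw [← e]; simp
          rcases Multiset.mem_cons.mp hm with h' | h'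
          · simp at h'
          · exact Multiset.mem_cons_of_mem h'
        · have hm : (w0, (CForm.neg p : CForm α.Char)) ∈ (w, CForm.and X Y) ::ₘ Γ := by
            rw [← e]; simp
          rcases Multiset.mem_cons.mp hm with h' | h'
          · simp at h'
          · exact Multiset.mem_cons_of_mem h'
    | orR h1 =>
        rename_i m Γ0 w0 A B
        rcases Multiset.cons_eq_cons.mp e with ⟨he, rfl⟩ | ⟨hne, cs, h1', h2'⟩
        · simp at he
        · subst h1'; subst h2'
          have g := IH m (Nat.lt_succ_self m) R _ h1 w X Y ((w0, A) ::ₘ (w0, B) ::ₘ cs)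
            (ms_rot3 _ _ _ _)
          have g2 := CLDh.orR (CLDh.perm (ms_rot3 _ _ _ _).symm g)
          exact CLDh.perm (Multiset.cons_swap _ _ _) g2
    | andR h1 h2 =>
        rename_i m Γ0 w0 A B
        rcases Multiset.cons_eq_cons.mp e with ⟨he, rfl⟩ | ⟨hne, cs, h1', h2'⟩
        · simp only [Prod.mk.injEq, CForm.and.injEq] at he
          obtain ⟨rfl, rfl, rfl⟩ := he
          exact h2.succ
        · subst h1'; subst h2'
          have g1 := IH m (Nat.lt_succ_self m) R _ h1 w X Y ((w0, A) ::ₘ cs)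
            (Multiset.cons_swap _ _ _)
          have g2 := IH m (Nat.lt_succ_self m) R _ h2 w X Y ((w0, B) ::ₘ cs)
            (Multiset.cons_swap _ _ _)
          have g3 := CLDh.andR (CLDh.perm (Multiset.cons_swap _ _ _) g1)
            (CLDh.perm (Multiset.cons_swap _ _ _) g2)
          exact CLDh.perm (Multiset.cons_swap _ _ _) g3
    | boxR hf h1 =>
        rename_i m Γ0 w0 u x A
        rcases Multiset.cons_eq_cons.mp e with ⟨he, _⟩ | ⟨hne, cs, h1', h2'⟩
        · simp at he
        · subst h1'; subst h2'
          have g := IH m (Nat.lt_succ_self m) _ _ h1 w X Y ((u, A) ::ₘ cs)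
            (Multiset.cons_swap _ _ _)
          have hf' : u ∉ relLabels R ∧
              u ∉ clfLabels ((w0, CForm.box x A) ::ₘ (w, Y) ::ₘ cs) := by
            refine ⟨hf.1, ?_⟩
            have := hf.2
            simp only [mem_clfLabels_cons] at this ⊢
            tauto
          have g2 := CLDh.boxR hf' (CLDh.perm (Multiset.cons_swap _ _ _) g)
          exact CLDh.perm (Multiset.cons_swap _ _ _) g2
    | dx w0 hax hf h1 =>
        rename_i m u x
        subst e
        have g := IH m (Nat.lt_succ_self m) _ _ h1 w X Y Γ rfl
        refine CLDh.dx w0 hax ⟨hf.1, ?_⟩ g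
        have := hf.2
        simp only [mem_clfLabels_cons] at this ⊢
        tauto
    | diaR hp h1 =>
        rename_i m Γ0 w0 u x A
        rcases Multiset.cons_eq_cons.mp e with ⟨he, _⟩ | ⟨hne, cs, h1', h2'⟩
        · simp at he
        · subst h1'; subst h2'
          have g := IH m (Nat.lt_succ_self m) _ _ h1 w X Y
            ((w0, CForm.dia x A) ::ₘ (u, A) ::ₘ cs) (ms_rot3 _ _ _ _)
          have g2 := CLDh.diaR hp (CLDh.perm (ms_rot3 _ _ _ _).symm g)
          exact CLDh.perm (Multiset.cons_swap _ _ _) g2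

end TranslationAux3

section TranslationAux3b

variable {α : Alphabet} {𝒜 : Set (Ax α.Char)}

lemma mem_relLabels_cons' {C : Type} {r : Rel C} {l : ℕ} {R : Multiset (Rel C)} :
    l ∈ relLabels (r ::ₘ R) ↔ l = r.1 ∨ l = r.2.2 ∨ l ∈ relLabels R := by
  obtain ⟨a, x, b⟩ := r
  exact mem_relLabels_cons

lemma subL_ne_self {v u l : ℕ} (h : u ≠ v) : subL v u l ≠ v := by
  unfold subL
  split
  · exact h
  · next h' => exact h'

/-- Admissibility of contraction on relational atoms. -/
lemma rel_ctr : ∀ n : ℕ, ∀ (R : Multiset (Rel α.Char)) (Δ : Multiset (CLF α.Char)),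
    CLDh α 𝒜 n R Δ → ∀ (r : Rel α.Char) (R0 : Multiset (Rel α.Char)),
    R = r ::ₘ r ::ₘ R0 → CLDh α 𝒜 n (r ::ₘ R0) Δ := by
  intro n
  induction n using Nat.strong_induction_on with
  | _ n IH =>
    intro R Δ h r R0 e
    cases h with
    | id m R' Γ0 w0 p => exact CLDh.id _ _ _ _ _
    | orR h1 => exact CLDh.orR (IH _ (Nat.lt_succ_self _) _ _ h1 r R0 e)
    | andR h1 h2 =>
        exact CLDh.andR (IH _ (Nat.lt_succ_self _) _ _ h1 r R0 e)
          (IH _ (Nat.lt_succ_self _) _ _ h2 r R0 e)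
    | boxR hf h1 =>
        rename_i m Γ0 w0 u x A
        subst e
        have g := IH _ (Nat.lt_succ_self _) _ _ h1 r ((w0, x, u) ::ₘ R0)
          (ms_rot3' _ _ _ _)
        have g2 := CLDh.permR (Multiset.cons_swap _ _ _) g
        refine CLDh.boxR ⟨?_, hf.2⟩ g2
        intro hm
        apply hf.1
        rcases mem_relLabels_cons'.mp hm with h' | h' | h'
        · exact mem_relLabels_cons'.mpr (Or.inl h')
        · exact mem_relLabels_cons'.mpr (Or.inr (Or.inl h'))
        · exact mem_relLabels_cons'.mpr (Or.inr (Or.inr (mem_relLabels_cons'.mpr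
            (Or.inr (Or.inr h')))))
    | dx w0 hax hf h1 =>
        rename_i m u x
        subst e
        have g := IH _ (Nat.lt_succ_self _) _ _ h1 r ((w0, x, u) ::ₘ R0)
          (ms_rot3' _ _ _ _)
        have g2 := CLDh.permR (Multiset.cons_swap _ _ _) g
        refine CLDh.dx w0 hax ⟨?_, hf.2⟩ g2
        intro hm
        apply hf.1
        rcases mem_relLabels_cons'.mp hm with h' | h' | h'
        · exact mem_relLabels_cons'.mpr (Or.inl h')
        · exact mem_relLabels_cons'.mpr (Or.inr (Or.inl h'))
        · exact mem_relLabels_cons'.mpr (Or.inr (Or.inr (mem_relLabels_cons'.mpr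
            (Or.inr (Or.inr h')))))
    | diaR hp h1 =>
        subst e
        exact CLDh.diaR (hp.congr (fun e he => mem_dedup he))
          (IH _ (Nat.lt_succ_self _) _ _ h1 r R0 rfl)

/-- Height-preserving invertibility of the `box` rule. -/
lemma box_inv : ∀ n : ℕ, ∀ (R : Multiset (Rel α.Char)) (Δ : Multiset (CLF α.Char)),
    CLDh α 𝒜 n R Δ → ∀ (w : ℕ) (x : α.Char) (A : CForm α.Char)
    (Γ : Multiset (CLF α.Char)) (u : ℕ),
    Δ = (w, CForm.box x A) ::ₘ Γ → u ∉ relLabels R → u ∉ clfLabels Γ → u ≠ w →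
    CLDh α 𝒜 n ((w, x, u) ::ₘ R) ((u, A) ::ₘ Γ) := by
  intro n
  induction n using Nat.strong_induction_on with
  | _ n IH =>
    intro R Δ h w x A Γ u e hu1 hu2 hu3
    cases h with
    | id m R0 Γ0 w0 p =>
        refine cldh_pair (w := w0) (p := p) ?_ ?_
        · have hm : (w0, (CForm.pos p : CForm α.Char)) ∈ (w, CForm.box x A) ::ₘ Γ := by
            rw [← e]; simp
          rcases Multiset.mem_cons.mp hm with h' | h'
          · simp at h'
          · exact Multiset.mem_cons_of_mem h'
        · have hm : (w0, (CForm.neg p : CForm α.Char)) ∈ (w, CForm.box x A) ::ₘ Γ := by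
            rw [← e]; simp
          rcases Multiset.mem_cons.mp hm with h' | h'
          · simp at h'
          · exact Multiset.mem_cons_of_mem h'
    | orR h1 =>
        rename_i m Γ0 w0 A0 B0
        rcases Multiset.cons_eq_cons.mp e with ⟨he, _⟩ | ⟨hne, cs, h1', h2'⟩
        · simp at he
        · subst h1'; subst h2'
          have hu2' : u ∉ clfLabels ((w0, A0) ::ₘ (w0, B0) ::ₘ cs) := by
            simp only [mem_clfLabels_cons] at hu2 ⊢; tauto
          have g := IH m (Nat.lt_succ_self m) _ _ h1 w x A ((w0, A0) ::ₘ (w0, B0) ::ₘ cs) u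
            (ms_rot3 _ _ _ _) hu1 hu2' hu3
          have g2 := CLDh.orR (CLDh.perm (ms_rot3 _ _ _ _).symm g)
          exact CLDh.perm (Multiset.cons_swap _ _ _) g2
    | andR h1 h2 =>
        rename_i m Γ0 w0 A0 B0
        rcases Multiset.cons_eq_cons.mp e with ⟨he, _⟩ | ⟨hne, cs, h1', h2'⟩
        · simp at he
        · subst h1'; subst h2'
          have hu2' : u ∉ clfLabels ((w0, A0) ::ₘ cs) := by
            simp only [mem_clfLabels_cons] at hu2 ⊢; tauto
          have hu2'' : u ∉ clfLabels ((w0, B0) ::ₘ cs) := by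
            simp only [mem_clfLabels_cons] at hu2 ⊢; tauto
          have g1 := IH m (Nat.lt_succ_self m) _ _ h1 w x A ((w0, A0) ::ₘ cs) u
            (Multiset.cons_swap _ _ _) hu1 hu2' hu3
          have g2 := IH m (Nat.lt_succ_self m) _ _ h2 w x A ((w0, B0) ::ₘ cs) u
            (Multiset.cons_swap _ _ _) hu1 hu2'' hu3
          have g3 := CLDh.andR (CLDh.perm (Multiset.cons_swap _ _ _) g1)
            (CLDh.perm (Multiset.cons_swap _ _ _) g2)
          exact CLDh.perm (Multiset.cons_swap _ _ _) g3
    | boxR hf h1 =>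
        rename_i m Γ0 w0 v x0 A0
        rcases Multiset.cons_eq_cons.mp e with ⟨he, rfl⟩ | ⟨hne, cs, h1', h2'⟩
        · simp only [Prod.mk.injEq, CForm.box.injEq] at he
          obtain ⟨rfl, rfl, rfl⟩ := he
          have hvw : w0 ≠ v := fun e' => hf.2 (mem_clfLabels_cons.mpr (Or.inl e'.symm))
          have hvΓ : v ∉ clfLabels Γ0 := fun e' => hf.2 (mem_clfLabels_cons.mpr (Or.inr e'))
          have g := CLDh.sub m _ _ v u h1
          rw [subR_cons, subR_fresh hf.1, subL_self, subL_ne hvw, subC_cons, subL_self,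
            subC_fresh hvΓ] at g
          exact g.succ
        · subst h1'; subst h2'
          set v2 := bnd R ((w0, CForm.box x0 A0) ::ₘ (w, CForm.box x A) ::ₘ cs) [u] with hv2
          have hv2w0 : (w0 : ℕ) < v2 := by
            rw [hv2]; exact bnd_clf (mem_clfLabels_cons.mpr (Or.inl rfl))
          have hv2w : (w : ℕ) < v2 := by
            rw [hv2]
            exact bnd_clf (mem_clfLabels_cons.mpr (Or.inr (mem_clfLabels_cons.mpr (Or.inl rfl))))
          have hv2cs : ∀ l ∈ clfLabels cs, l < v2 := by
            intro l hl
            rw [hv2]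
            exact bnd_clf (mem_clfLabels_cons.mpr (Or.inr (mem_clfLabels_cons.mpr (Or.inr hl))))
          have hv2R : ∀ l ∈ relLabels R, l < v2 := by
            intro l hl; rw [hv2]; exact bnd_rel hl
          have hv2u : (u : ℕ) < v2 := by rw [hv2]; exact bnd_list (by simp)
          have hvw0 : w0 ≠ v := fun e' => hf.2 (mem_clfLabels_cons.mpr (Or.inl e'.symm))
          have hvrest : v ∉ clfLabels ((w, CForm.box x A) ::ₘ cs) := fun e' =>
            hf.2 (mem_clfLabels_cons.mpr (Or.inr e'))
          have g1 := CLDh.sub m _ _ v v2 h1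
          rw [subR_cons, subR_fresh hf.1, subL_self, subL_ne hvw0, subC_cons, subL_self,
            subC_fresh hvrest] at g1
          have hu_ne_w0 : u ≠ w0 := fun e' =>
            hu2 (by rw [e']; exact mem_clfLabels_cons.mpr (Or.inl rfl))
          have hu1' : u ∉ relLabels ((w0, x0, v2) ::ₘ R) := by
            intro hm
            rcases mem_relLabels_cons.mp hm with e' | e' | hm'
            · exact hu_ne_w0 e'
            · omega
            · exact hu1 hm'
          have hu2' : u ∉ clfLabels ((v2, A0) ::ₘ cs) := by
            intro hm
            rcases mem_clfLabels_cons.mp hm with e' | hm'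
            · omega
            · exact hu2 (mem_clfLabels_cons.mpr (Or.inr hm'))
          have g2 := IH m (Nat.lt_succ_self m) _ _ g1 w x A ((v2, A0) ::ₘ cs) u
            (Multiset.cons_swap _ _ _) hu1' hu2' hu3
          have g3 := CLDh.permR (Multiset.cons_swap _ _ _) g2
          have hf2 : v2 ∉ relLabels ((w, x, u) ::ₘ R) ∧
              v2 ∉ clfLabels ((w0, CForm.box x0 A0) ::ₘ (u, A) ::ₘ cs) := by
            constructor
            · intro hm
              rcases mem_relLabels_cons.mp hm with e' | e' | hm'
              · omega
              · omega
              · have := hv2R v2 hm'; omega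
            · intro hm
              rcases mem_clfLabels_cons.mp hm with e' | hm'
              · omega
              rcases mem_clfLabels_cons.mp hm' with e' | hm''
              · omega
              · have := hv2cs v2 hm''; omega
          have g4 := CLDh.boxR hf2 (CLDh.perm (Multiset.cons_swap _ _ _) g3)
          exact CLDh.perm (Multiset.cons_swap _ _ _) g4
    | dx w0 hax hf h1 =>
        rename_i m v x0
        subst e
        set v2 := bnd R ((w, CForm.box x A) ::ₘ Γ) [u, w] with hv2
        have hv2u : (u : ℕ) < v2 := by rw [hv2]; exact bnd_list (by simp)
        have hv2w : (w : ℕ) < v2 := by rw [hv2]; exact bnd_list (by simp)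
        have hv2Γ : ∀ l ∈ clfLabels Γ, l < v2 := by
          intro l hl
          rw [hv2]; exact bnd_clf (mem_clfLabels_cons.mpr (Or.inr hl))
        have hv2R : ∀ l ∈ relLabels R, l < v2 := by
          intro l hl; rw [hv2]; exact bnd_rel hl
        set u2 := bnd R ((w, CForm.box x A) ::ₘ Γ) [u, w, v2] with hu2d
        have hu2u : (u : ℕ) < u2 := by rw [hu2d]; exact bnd_list (by simp)
        have hu2v2 : v2 ≠ u := by omega
        have g1 := CLDh.sub m _ _ v v2 h1
        rw [subR_cons, subR_fresh hf.1, subL_self, subC_fresh hf.2] at g1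
        have huΔ : u ∉ clfLabels ((w, CForm.box x A) ::ₘ Γ) := by
          intro hm
          rcases mem_clfLabels_cons.mp hm with e' | hm'
          · exact hu3 e'
          · exact hu2 hm'
        have g2 := CLDh.sub m _ _ u u2 g1
        rw [subR_cons, subR_fresh hu1, subL_ne hu2v2, subC_fresh huΔ] at g2
        have hw0' : subL u u2 (subL v v2 w0) ≠ u := subL_ne_self (by omega)
        have hu1' : u ∉ relLabels ((subL u u2 (subL v v2 w0), x0, v2) ::ₘ R) := by
          intro hm
          rcases mem_relLabels_cons.mp hm with e' | e' | hm'
          · exact hw0' e'.symm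
          · omega
          · exact hu1 hm'
        have g3 := IH m (Nat.lt_succ_self m) _ _ g2 w x A Γ u rfl hu1' hu2 hu3
        have g4 := CLDh.permR (Multiset.cons_swap _ _ _) g3
        refine CLDh.dx _ hax ⟨?_, ?_⟩ g4
        · intro hm
          rcases mem_relLabels_cons.mp hm with e' | e' | hm'
          · omega
          · omega
          · have := hv2R v2 hm'; omega
        · intro hm
          rcases mem_clfLabels_cons.mp hm with e' | hm'
          · omega
          · have := hv2Γ v2 hm'; omega
    | diaR hp h1 =>
        rename_i m Γ0 w0 u0 x0 A0
        rcases Multiset.cons_eq_cons.mp e with ⟨he, _⟩ | ⟨hne, cs, h1', h2'⟩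
        · simp at he
        · subst h1'; subst h2'
          have hu_ne_w0 : u ≠ w0 := fun e' =>
            hu2 (by rw [e']; exact mem_clfLabels_cons.mpr (Or.inl rfl))
          have hu_ne_u0 : u ≠ u0 := by
            obtain ⟨s, hpath, _⟩ := hp
            rcases hpath.end_mem with rfl | hm
            · exact hu_ne_w0
            · exact fun e' => hu1 (e' ▸ hm)
          have hu2' : u ∉ clfLabels ((w0, CForm.dia x0 A0) ::ₘ (u0, A0) ::ₘ cs) := by
            intro hm
            rcases mem_clfLabels_cons.mp hm with e' | hm'
            · exact hu_ne_w0 e'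
            rcases mem_clfLabels_cons.mp hm' with e' | hm''
            · exact hu_ne_u0 e'
            · exact hu2 (mem_clfLabels_cons.mpr (Or.inr hm''))
          have g := IH m (Nat.lt_succ_self m) _ _ h1 w x A
            ((w0, CForm.dia x0 A0) ::ₘ (u0, A0) ::ₘ cs) u (ms_rot3 _ _ _ _) hu1 hu2' hu3
          have g2 := CLDh.diaR (hp.congr (fun e he => Multiset.mem_cons_of_mem he))
            (CLDh.perm (ms_rot3 _ _ _ _).symm g)
          exact CLDh.perm (Multiset.cons_swap _ _ _) g2

end TranslationAux3b

section TranslationAux3c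

variable {α : Alphabet} {𝒜 : Set (Ax α.Char)}

lemma mem_clfLabels_cons'' {C : Type} {b : CLF C} {l : ℕ} {Γ : Multiset (CLF C)} :
    l ∈ clfLabels (b ::ₘ Γ) ↔ l = b.1 ∨ l ∈ clfLabels Γ := by
  obtain ⟨w, A⟩ := b
  exact mem_clfLabels_cons

/-- Admissibility of contraction on labeled formulae. -/
lemma ctr : ∀ n : ℕ, ∀ (R : Multiset (Rel α.Char)) (Δ : Multiset (CLF α.Char)),
    CLDh α 𝒜 n R Δ → ∀ (c : CLF α.Char) (Γ : Multiset (CLF α.Char)),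
    Δ = c ::ₘ c ::ₘ Γ → CLDh α 𝒜 n R (c ::ₘ Γ) := by
  intro n
  induction n using Nat.strong_induction_on with
  | _ n IH =>
    intro R Δ h c Γ e
    cases h with
    | id m R0 Γ0 w0 p =>
        refine cldh_pair (w := w0) (p := p) ?_ ?_
        · have hm : (w0, (CForm.pos p : CForm α.Char)) ∈ c ::ₘ c ::ₘ Γ := by
            rw [← e]; simp
          exact mem_dedup hm
        · have hm : (w0, (CForm.neg p : CForm α.Char)) ∈ c ::ₘ c ::ₘ Γ := by
            rw [← e]; simp
          exact mem_dedup hm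
    | orR h1 =>
        rename_i m Γ0 w0 A B
        rcases cons_cons_cases e with ⟨he, hΓ0⟩ | ⟨ds, hΓ0, hΓ⟩
        · subst he; subst hΓ0
          have g1 := or_inv m R _ h1 w0 A B ((w0, A) ::ₘ (w0, B) ::ₘ Γ) (ms_rot3 _ _ _ _)
          have g2 := IH m (Nat.lt_succ_self m) R _ g1 (w0, A) ((w0, B) ::ₘ (w0, B) ::ₘ Γ)
            (congrArg (fun t => (w0, A) ::ₘ t) (Multiset.cons_swap _ _ _))
          have g3 := IH m (Nat.lt_succ_self m) R _ g2 (w0, B) ((w0, A) ::ₘ Γ)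
            (ms_rot3' _ _ _ _)
          exact CLDh.orR (CLDh.perm (Multiset.cons_swap _ _ _) g3)
        · subst hΓ0; subst hΓ
          have g := IH m (Nat.lt_succ_self m) R _ h1 c ((w0, A) ::ₘ (w0, B) ::ₘ ds)
            (ms_swap22 _ _ _ _ _)
          have g2 := CLDh.orR (CLDh.perm (ms_rot3 _ _ _ _).symm g)
          exact CLDh.perm (Multiset.cons_swap _ _ _) g2
    | andR h1 h2 =>
        rename_i m Γ0 w0 A B
        rcases cons_cons_cases e with ⟨he, hΓ0⟩ | ⟨ds, hΓ0, hΓ⟩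
        · subst he; subst hΓ0
          have g1 := and_inv_l m R _ h1 w0 A B ((w0, A) ::ₘ Γ) (Multiset.cons_swap _ _ _)
          have g1' := IH m (Nat.lt_succ_self m) R _ g1 (w0, A) Γ rfl
          have g2 := and_inv_r m R _ h2 w0 A B ((w0, B) ::ₘ Γ) (Multiset.cons_swap _ _ _)
          have g2' := IH m (Nat.lt_succ_self m) R _ g2 (w0, B) Γ rfl
          exact CLDh.andR g1' g2'
        · subst hΓ0; subst hΓ
          have g1 := IH m (Nat.lt_succ_self m) R _ h1 c ((w0, A) ::ₘ ds) (ms_rot3' _ _ _ _)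
          have g2 := IH m (Nat.lt_succ_self m) R _ h2 c ((w0, B) ::ₘ ds) (ms_rot3' _ _ _ _)
          have g3 := CLDh.andR (CLDh.perm (Multiset.cons_swap _ _ _) g1)
            (CLDh.perm (Multiset.cons_swap _ _ _) g2)
          exact CLDh.perm (Multiset.cons_swap _ _ _) g3
    | boxR hf h1 =>
        rename_i m Γ0 w0 u x A
        rcases cons_cons_cases e with ⟨he, hΓ0⟩ | ⟨ds, hΓ0, hΓ⟩
        · subst he; subst hΓ0
          -- h1 : CLDh m ((w0,x,u)::ₘR) ((u,A)::ₘ(w0,box x A)::ₘΓ)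
          set u2 := bnd ((w0, x, u) ::ₘ R) ((u, A) ::ₘ (w0, CForm.box x A) ::ₘ Γ) [w0]
            with hu2
          have hu2u : (u : ℕ) < u2 := by
            rw [hu2]; exact bnd_clf (mem_clfLabels_cons.mpr (Or.inl rfl))
          have hu2w0 : u2 ≠ w0 := by rw [hu2]; exact bnd_ne (by simp)
          have hu2Γ : ∀ l ∈ clfLabels Γ, l < u2 := by
            intro l hl
            rw [hu2]
            exact bnd_clf (mem_clfLabels_cons.mpr (Or.inr (mem_clfLabels_cons.mpr (Or.inr hl))))
          have hu2R : u2 ∉ relLabels ((w0, x, u) ::ₘ R) := by rw [hu2]; exact bnd_not_rel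
          have hu2c : u2 ∉ clfLabels ((u, A) ::ₘ Γ) := by
            intro hm
            rcases mem_clfLabels_cons.mp hm with e' | hm'
            · omega
            · have := hu2Γ u2 hm'; omega
          have g1 := box_inv m _ _ h1 w0 x A ((u, A) ::ₘ Γ) u2 (Multiset.cons_swap _ _ _)
            hu2R hu2c hu2w0
          -- g1 : CLDh m ((w0,x,u2)::ₘ(w0,x,u)::ₘR)((u2,A)::ₘ(u,A)::ₘΓ)
          have hw0u2 : w0 ≠ u2 := fun e' => hu2w0 e'.symm
          have huu2 : u ≠ u2 := by omega
          have hu2R' : u2 ∉ relLabels R := by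
            intro hm; exact hu2R (mem_relLabels_cons.mpr (Or.inr (Or.inr hm)))
          have hu2c' : u2 ∉ clfLabels ((u, A) ::ₘ Γ) := hu2c
          have g2 := CLDh.sub m _ _ u2 u g1
          rw [subR_cons, subR_cons, subC_cons, subC_cons, subR_fresh hu2R',
            subC_fresh (fun hm => hu2c (mem_clfLabels_cons.mpr (Or.inr hm))), subL_self,
            subL_ne hw0u2, subL_ne huu2] at g2
          -- g2 : CLDh m ((w0,x,u)::ₘ(w0,x,u)::ₘR)((u,A)::ₘ(u,A)::ₘΓ)
          have g3 := rel_ctr m _ _ g2 (w0, x, u) R rfl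
          have g4 := IH m (Nat.lt_succ_self m) _ _ g3 (u, A) Γ rfl
          refine CLDh.boxR ⟨hf.1, ?_⟩ g4
          intro hm
          apply hf.2
          simp only [mem_clfLabels_cons] at hm ⊢
          tauto
        · subst hΓ0; subst hΓ
          -- h1 : CLDh m ((w0,x,u)::ₘR) ((u,A)::ₘc::ₘc::ₘds)
          have g := IH m (Nat.lt_succ_self m) _ _ h1 c ((u, A) ::ₘ ds) (ms_rot3' _ _ _ _)
          have g2 := CLDh.boxR (hf := ?_) (CLDh.perm (Multiset.cons_swap _ _ _) g)
          · exact CLDh.perm (Multiset.cons_swap _ _ _) g2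
          · refine ⟨hf.1, ?_⟩
            intro hm
            apply hf.2
            simp only [mem_clfLabels_cons''] at hm ⊢
            tauto
    | dx w0 hax hf h1 =>
        rename_i m u x
        subst e
        have g := IH m (Nat.lt_succ_self m) _ _ h1 c Γ rfl
        refine CLDh.dx w0 hax ⟨hf.1, ?_⟩ g
        intro hm
        apply hf.2
        simp only [mem_clfLabels_cons''] at hm ⊢
        tauto
    | diaR hp h1 =>
        rename_i m Γ0 w0 u x A
        rcases cons_cons_cases e with ⟨he, hΓ0⟩ | ⟨ds, hΓ0, hΓ⟩
        · subst he; subst hΓ0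
          -- h1 : CLDh m R ((w0,dia x A)::ₘ(u,A)::ₘ(w0,dia x A)::ₘΓ)
          have g := IH m (Nat.lt_succ_self m) _ _ h1 (w0, CForm.dia x A) ((u, A) ::ₘ Γ)
            (congrArg (fun t => (w0, CForm.dia x A) ::ₘ t) (Multiset.cons_swap _ _ _))
          exact CLDh.diaR hp g
        · subst hΓ0; subst hΓ
          -- h1 : CLDh m R ((w0,dia x A)::ₘ(u,A)::ₘc::ₘc::ₘds)
          have g := IH m (Nat.lt_succ_self m) _ _ h1 c
            ((w0, CForm.dia x A) ::ₘ (u, A) ::ₘ ds) (ms_swap22 _ _ _ _ _)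
          have g2 := CLDh.diaR hp (CLDh.perm (ms_rot3 _ _ _ _).symm g)
          exact CLDh.perm (Multiset.cons_swap _ _ _) g2

end TranslationAux3c

section TranslationAux4

variable {α : Alphabet} {𝒜 : Set (Ax α.Char)}

lemma CLD.perm' {R : Multiset (Rel α.Char)} {Γ Δ : Multiset (CLF α.Char)}
    (e : Γ = Δ) (h : CLD α 𝒜 R Γ) : CLD α 𝒜 R Δ := e ▸ h

lemma CLD.subst2 (a b : ℕ) {R : Multiset (Rel α.Char)} {Γ : Multiset (CLF α.Char)}
    (h : CLD α 𝒜 R Γ) : CLD α 𝒜 (subR a b R) (subC a b Γ) := by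
  obtain ⟨n, hn⟩ := h.toh
  exact (CLDh.sub n _ _ a b hn).toCLD

lemma CLD.weak2 (Θ : Multiset (CLF α.Char)) {R : Multiset (Rel α.Char)}
    {Γ : Multiset (CLF α.Char)} (h : CLD α 𝒜 R Γ) : CLD α 𝒜 R (Γ + Θ) := by
  obtain ⟨n, hn⟩ := h.toh
  exact (CLDh.weak n _ _ Θ hn).toCLD

lemma CLD.ainvl2 {R : Multiset (Rel α.Char)} {Γ : Multiset (CLF α.Char)} {w : ℕ}
    {X Y : CForm α.Char} (h : CLD α 𝒜 R ((w, CForm.and X Y) ::ₘ Γ)) :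
    CLD α 𝒜 R ((w, X) ::ₘ Γ) := by
  obtain ⟨n, hn⟩ := h.toh
  exact (and_inv_l n _ _ hn w X Y Γ rfl).toCLD

lemma CLD.ctr2 {R : Multiset (Rel α.Char)} {Γ : Multiset (CLF α.Char)} {c : CLF α.Char}
    (h : CLD α 𝒜 R (c ::ₘ c ::ₘ Γ)) : CLD α 𝒜 R (c ::ₘ Γ) := by
  obtain ⟨n, hn⟩ := h.toh
  exact (ctr n _ _ hn c Γ rfl).toCLD

lemma cneg_cneg {C : Type} (A : CForm C) : cneg (cneg A) = A := by
  induction A with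
  | pos p => rfl
  | neg p => rfl
  | or A B ihA ihB => simp [cneg, ihA, ihB]
  | and A B ihA ihB => simp [cneg, ihA, ihB]
  | dia x A ihA => simp [cneg, ihA]
  | box x A ihA => simp [cneg, ihA]

lemma mem_clfLabels_map {Γ : Multiset (LF α.Char)} {l : ℕ} :
    l ∈ clfLabels (Γ.map (fun b => (b.1, cneg (toC b.2)))) ↔ l ∈ lfLabels Γ := by
  constructor
  · rintro ⟨b, hb, rfl⟩
    obtain ⟨a, ha, rfl⟩ := Multiset.mem_map.mp hb
    exact ⟨a, ha, rfl⟩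
  · rintro ⟨a, ha, rfl⟩
    exact ⟨_, Multiset.mem_map_of_mem _ ha, rfl⟩

/-- The main translation lemma, with built-in weakening. -/
lemma main_translation {n : ℕ} {R : Multiset (Rel α.Char)} {Γ : Multiset (LF α.Char)}
    {v : ℕ} {A : Formula α.Char} (h : LDs α 𝒜 n R Γ v A) :
    ∀ Θ : Multiset (CLF α.Char),
      CLD α 𝒜 R ((v, toC A) ::ₘ (Γ.map (fun b => (b.1, cneg (toC b.2))) + Θ)) := by
  induction h with
  | id n R Γ w p =>
      intro Θ
      simp only [Multiset.map_cons, Multiset.cons_add, toC, cneg]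
      exact CLD.id _ _ _ _
  | botL n R Γ w u A =>
      intro Θ
      simp only [Multiset.map_cons, Multiset.cons_add, toC, cneg, cbot]
      have d0 : CLD α 𝒜 R ((w, CForm.pos 0) ::ₘ (w, CForm.neg 0) ::ₘ (u, toC A) ::ₘ
          (Γ.map (fun b => (b.1, cneg (toC b.2))) + Θ)) := CLD.id _ _ _ _
      have d1 := CLD.orR (CLD.perm' (Multiset.cons_swap _ _ _) d0)
      exact CLD.perm' (Multiset.cons_swap _ _ _) d1
  | orL h1 h2 ih1 ih2 =>
      intro Θ
      simp only [Multiset.map_cons, Multiset.cons_add, toC, cneg]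
      have g1 := ih1 Θ
      simp only [Multiset.map_cons, Multiset.cons_add] at g1
      have g2 := ih2 Θ
      simp only [Multiset.map_cons, Multiset.cons_add] at g2
      have d := CLD.andR (CLD.perm' (Multiset.cons_swap _ _ _) g1)
        (CLD.perm' (Multiset.cons_swap _ _ _) g2)
      exact CLD.perm' (Multiset.cons_swap _ _ _) d
  | orR1 h1 ih =>
      intro Θ
      rename_i n R Γ w A B
      simp only [toC]
      have g := ih ((w, toC B) ::ₘ Θ)
      have g' := CLD.perm' (congrArg (fun t => (w, toC A) ::ₘ t)
        (Multiset.add_cons _ _ _)) g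
      exact CLD.orR g'
  | orR2 h1 ih =>
      intro Θ
      rename_i n R Γ w A B
      simp only [toC]
      have g := ih ((w, toC A) ::ₘ Θ)
      have g' := CLD.perm' (congrArg (fun t => (w, toC B) ::ₘ t)
        (Multiset.add_cons _ _ _)) g
      exact CLD.orR (CLD.perm' (Multiset.cons_swap _ _ _) g')
  | andL h1 ih =>
      intro Θ
      simp only [Multiset.map_cons, Multiset.cons_add, toC, cneg]
      have g := ih Θ
      simp only [Multiset.map_cons, Multiset.cons_add] at g
      have d := CLD.orR (CLD.perm' (ms_rot3' _ _ _ _) g)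
      exact CLD.perm' (Multiset.cons_swap _ _ _) d
  | andR h1 h2 ih1 ih2 =>
      intro Θ
      simp only [toC]
      exact CLD.andR (ih1 Θ) (ih2 Θ)
  | impL h1 h2 ih1 ih2 =>
      intro Θ
      rename_i n R Γ w u A B C
      simp only [Multiset.map_cons, Multiset.cons_add, toC, cneg, cimp, cneg_cneg]
      have g1 := ih1 ((u, toC C) ::ₘ Θ)
      simp only [Multiset.map_cons, Multiset.cons_add, Multiset.add_cons, toC, cneg, cimp,
        cneg_cneg] at g1
      -- g1 : (w,toC A) ::ₘ (w, and (toC A) (cneg (toC B))) ::ₘ (u,toC C) ::ₘ (mΓ + Θ)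
      have d1 := CLD.ctr2 (CLD.ainvl2 (CLD.perm' (ms_rot3 _ _ _ _) g1))
      -- d1 : (w,toC A) ::ₘ (u,toC C) ::ₘ (mΓ + Θ)
      have g2 := ih2 Θ
      simp only [Multiset.map_cons, Multiset.cons_add] at g2
      have d2 := CLD.perm' (Multiset.cons_swap _ _ _) g2
      -- d2 : (w, cneg (toC B)) ::ₘ (u,toC C) ::ₘ (mΓ + Θ)
      have d := CLD.andR d1 d2
      exact CLD.perm' (Multiset.cons_swap _ _ _) d
  | impR h1 ih =>
      intro Θ
      simp only [toC, cimp]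
      have g := ih Θ
      simp only [Multiset.map_cons, Multiset.cons_add] at g
      exact CLD.orR (CLD.perm' (Multiset.cons_swap _ _ _) g)
  | diaL hf h1 ih =>
      intro Θ
      rename_i n R Γ w u v x A B
      simp only [Multiset.map_cons, Multiset.cons_add, toC, cneg]
      have hu1 : u ∉ relLabels R := hf.1
      have huw : w ≠ u := fun e => hf.2.1 (e ▸ mem_lfLabels_cons.mpr (Or.inl rfl))
      have huΓ : u ∉ lfLabels Γ := fun e => hf.2.1 (mem_lfLabels_cons.mpr (Or.inr e))
      have huv : v ≠ u := fun e => hf.2.2 e.symm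
      have g := ih 0
      simp only [Multiset.map_cons, Multiset.cons_add, add_zero] at g
      -- g : CLD ((w,x,u)::ₘR) ((v,toC B)::ₘ(u,cneg (toC A))::ₘmΓ)
      set u0 := bnd R ((w, CForm.box x (cneg (toC A))) ::ₘ (v, toC B) ::ₘ
        (Γ.map (fun b => (b.1, cneg (toC b.2))) + Θ)) [] with hu0
      have g2 := CLD.subst2 u u0 g
      rw [subR_cons, subR_fresh hu1, subL_self, subL_ne huw, subC_cons, subC_cons,
        subL_self, subL_ne huv,
        subC_fresh (fun hm => huΓ (mem_clfLabels_map.mp hm))] at g2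
      have g3 := CLD.weak2 Θ g2
      rw [Multiset.cons_add, Multiset.cons_add] at g3
      have g4 := CLD.perm' (Multiset.cons_swap _ _ _) g3
      have g5 := CLD.boxR ⟨by rw [hu0]; exact bnd_not_rel, by rw [hu0]; exact bnd_not_clf⟩ g4
      exact CLD.perm' (Multiset.cons_swap _ _ _) g5
  | boxR hf h1 ih =>
      intro Θ
      rename_i n R Γ w u x A
      simp only [toC]
      have hu1 : u ∉ relLabels R := hf.1
      have huΓ : u ∉ lfLabels Γ := hf.2.1
      have huw : w ≠ u := fun e => hf.2.2 e.symm
      have g := ih 0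
      rw [add_zero] at g
      set u0 := bnd R ((w, CForm.box x (toC A)) ::ₘ
        (Γ.map (fun b => (b.1, cneg (toC b.2))) + Θ)) [] with hu0
      have g2 := CLD.subst2 u u0 g
      rw [subR_cons, subR_fresh hu1, subL_self, subL_ne huw, subC_cons, subL_self,
        subC_fresh (fun hm => huΓ (mem_clfLabels_map.mp hm))] at g2
      have g3 := CLD.weak2 Θ g2
      rw [Multiset.cons_add] at g3
      exact CLD.boxR ⟨by rw [hu0]; exact bnd_not_rel, by rw [hu0]; exact bnd_not_clf⟩ g3
  | dx w hax hf h1 ih =>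
      intro Θ
      rename_i n R Γ u va x A
      have hu1 : u ∉ relLabels R := hf.1
      have huΓ : u ∉ lfLabels Γ := hf.2.1
      have huv : va ≠ u := fun e => hf.2.2 e.symm
      have g := ih 0
      rw [add_zero] at g
      set u0 := bnd R ((va, toC A) ::ₘ
        (Γ.map (fun b => (b.1, cneg (toC b.2))) + Θ)) [] with hu0
      have g2 := CLD.subst2 u u0 g
      rw [subR_cons, subR_fresh hu1, subL_self, subC_cons, subL_ne huv,
        subC_fresh (fun hm => huΓ (mem_clfLabels_map.mp hm))] at g2
      have g3 := CLD.weak2 Θ g2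
      rw [Multiset.cons_add] at g3
      exact CLD.dx _ hax ⟨by rw [hu0]; exact bnd_not_rel, by rw [hu0]; exact bnd_not_clf⟩ g3
  | pdia w hp h1 ih =>
      intro Θ
      rename_i n R Γ u x A
      simp only [toC]
      have g := ih ((w, CForm.dia x (toC A)) ::ₘ Θ)
      have g' := CLD.perm' (congrArg (fun t => (u, toC A) ::ₘ t)
        (Multiset.add_cons _ _ _)) g
      exact CLD.diaR hp (CLD.perm' (Multiset.cons_swap _ _ _) g')
  | pbox hp h1 ih =>
      intro Θ
      rename_i n R Γ w u v x A B
      simp only [Multiset.map_cons, Multiset.cons_add, toC, cneg]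
      have g := ih Θ
      simp only [Multiset.map_cons, Multiset.cons_add, toC, cneg] at g
      have d := CLD.diaR hp (CLD.perm' (ms_rot3' _ _ _ _) g)
      exact CLD.perm' (Multiset.cons_swap _ _ _) d

end TranslationAux4

/-- **Intuitionistic-to-classical translation of proofs**: if `R, Γ ⊢ w : A` is
derivable in `L*_Σ(𝒜)`, then `R ⊢ ¬Γ, w : A` is derivable in the refined
labeled calculus `L^C_Σ(𝒜)` for the corresponding classical grammar logic. -/
theorem int_to_classical (α : Alphabet) (𝒜 : Set (Ax α.Char))
    (R : Multiset (Rel α.Char)) (Γ : Multiset (LF α.Char)) (w : ℕ)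
    (A : Formula α.Char) (h : LDerivS α 𝒜 R Γ w A) :
    CLD α 𝒜 R ((w, toC A) ::ₘ Γ.map (fun b => (b.1, cneg (toC b.2)))) := by
  obtain ⟨n, hn⟩ := h
  have := main_translation hn 0
  rwa [add_zero] at this

end IGL
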